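/- arXiv:2007.14115 — 4 statements merged into one kernel-verified Lean document; each statement's English description precedes it below -/
import Mathlib

section
/- Let s, t, α be positive integers and let G be a finite abelian group with line set 𝓛 making (G,𝓛) a partial geometry pg(s,t,α) admitting G as an abelian Singer group (axioms (i)–(v) of the encoding). Let L₀, L₁, …, L_t be the t+1 lines of 𝓛 containing the identity e. Then D = (L₀ ∪ L₁ ∪ ⋯ ∪ L_t) \ {e} is a regular partial difference set in G with parameters v = (s+1)(st+α)/α, k = s(t+1), λ = s − 1 + t(α−1), μ = α(t+1). -/
/-- `D` is a `(v,k,λ,μ)` partial difference set in the finite group `G` (written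
multiplicatively): `|G| = v`, `|D| = k`, every non-identity element of `D` is represented
exactly `lam` times as `g * h⁻¹` with `g h ∈ D`, `g ≠ h`, and every non-identity element
of `G` not in `D` exactly `mu` times. -/
def IsPDS {G : Type*} [Group G] (D : Set G) (v k lam mu : ℕ) : Prop :=
  Nat.card G = v ∧ D.ncard = k ∧
  (∀ z : G, z ≠ 1 → z ∈ D →
    {p : G × G | p.1 ∈ D ∧ p.2 ∈ D ∧ p.1 ≠ p.2 ∧ p.1 * p.2⁻¹ = z}.ncard = lam) ∧
  (∀ z : G, z ≠ 1 → z ∉ D →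
    {p : G × G | p.1 ∈ D ∧ p.2 ∈ D ∧ p.1 ≠ p.2 ∧ p.1 * p.2⁻¹ = z}.ncard = mu)

/-- `D` is regular: it avoids the identity and is closed under inversion. -/
def IsRegularPDS {G : Type*} [Group G] (D : Set G) : Prop :=
  (1 : G) ∉ D ∧ ∀ g ∈ D, g⁻¹ ∈ D

/-- Encoding of a partial geometry `pg(s,t,α)` whose point set is the abelian group `G`,
admitting `G` (acting by translation) as an abelian Singer group; the lines are the finite
subsets of `G` collected in `𝓛`.  Axioms (i)–(v). -/
structure IsPGSinger (G : Type*) [CommGroup G] [DecidableEq G]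
    (𝓛 : Set (Finset G)) (s t α : ℕ) : Prop where
  /-- (i) every line has exactly `s+1` points -/
  line_card : ∀ L ∈ 𝓛, L.card = s + 1
  /-- (ii) every point lies on exactly `t+1` lines -/
  point_deg : ∀ x : G, {L | L ∈ 𝓛 ∧ x ∈ L}.ncard = t + 1
  /-- (iii) two distinct lines share at most one point -/
  line_inter : ∀ L ∈ 𝓛, ∀ M ∈ 𝓛, L ≠ M → ((L : Set G) ∩ (M : Set G)).ncard ≤ 1
  /-- (iv) for a non-incident point–line pair `(x,L)`, exactly `α` lines through `x` meet `L` -/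
  alpha_ax : ∀ x : G, ∀ L ∈ 𝓛, x ∉ L →
    {M | M ∈ 𝓛 ∧ x ∈ M ∧ ∃ y ∈ L, y ∈ M}.ncard = α
  /-- (v) the line set is closed under translation by elements of `G` -/
  translate : ∀ g : G, ∀ L ∈ 𝓛, L.image (fun y => g * y) ∈ 𝓛

set_option linter.unusedSectionVars false

namespace PGaux

variable {G : Type*} [CommGroup G] [Fintype G] [DecidableEq G]
variable {𝓛 : Set (Finset G)} {s t α : ℕ}

/-- collinearity -/
def Coll (𝓛 : Set (Finset G)) (a b : G) : Prop := ∃ L ∈ 𝓛, a ∈ L ∧ b ∈ L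

lemma coll_comm {a b : G} (h : Coll 𝓛 a b) : Coll 𝓛 b a := by
  obtain ⟨L, hL, ha, hb⟩ := h; exact ⟨L, hL, hb, ha⟩

lemma coll_mul (hpg : IsPGSinger G 𝓛 s t α) (g : G) {a b : G} (h : Coll 𝓛 a b) :
    Coll 𝓛 (g * a) (g * b) := by
  obtain ⟨L, hL, ha, hb⟩ := h
  exact ⟨L.image (fun y => g * y), hpg.translate g L hL,
    Finset.mem_image_of_mem _ ha, Finset.mem_image_of_mem _ hb⟩

lemma coll_mul_iff (hpg : IsPGSinger G 𝓛 s t α) (g : G) {a b : G} :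
    Coll 𝓛 (g * a) (g * b) ↔ Coll 𝓛 a b := by
  constructor
  · intro h
    have := coll_mul hpg g⁻¹ h
    simpa using this
  · exact coll_mul hpg g

lemma eq_or_eq (hpg : IsPGSinger G 𝓛 s t α) {L M : Finset G} (hL : L ∈ 𝓛) (hM : M ∈ 𝓛)
    {a b : G} (haL : a ∈ L) (haM : a ∈ M) (hbL : b ∈ L) (hbM : b ∈ M) :
    a = b ∨ L = M := by
  by_contra h
  push_neg at h
  obtain ⟨hab, hLM⟩ := h
  have hsub : ({a, b} : Set G) ⊆ (L : Set G) ∩ (M : Set G) := by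
    intro x hx
    simp only [Set.mem_insert_iff, Set.mem_singleton_iff] at hx
    rcases hx with rfl | rfl <;> simp [haL, haM, hbL, hbM]
  have h2 : ({a, b} : Set G).ncard = 2 := Set.ncard_pair hab
  have h3 := Set.ncard_le_ncard hsub (Set.toFinite _)
  have h4 := hpg.line_inter L hL M hM hLM
  omega

/-- Lemma C: for a point `x` off a line `L`, exactly `α` points of `L` are collinear with `x`. -/
lemma points_on_line_coll (hpg : IsPGSinger G 𝓛 s t α) {x : G} {L : Finset G}
    (hL : L ∈ 𝓛) (hx : x ∉ L) :
    {y : G | y ∈ L ∧ Coll 𝓛 x y}.ncard = α := by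
  set P : Set (Finset G × G) := {p | p.1 ∈ 𝓛 ∧ x ∈ p.1 ∧ p.2 ∈ L ∧ p.2 ∈ p.1} with hP
  have h1 : Prod.fst '' P = {M | M ∈ 𝓛 ∧ x ∈ M ∧ ∃ y ∈ L, y ∈ M} := by
    ext M
    simp only [Set.mem_image, Set.mem_setOf_eq, hP, Prod.exists]
    constructor
    · rintro ⟨M', y, ⟨h1, h2, h3, h4⟩, rfl⟩
      exact ⟨h1, h2, y, h3, h4⟩
    · rintro ⟨h1, h2, y, h3, h4⟩
      exact ⟨M, y, ⟨h1, h2, h3, h4⟩, rfl⟩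
  have h2 : Prod.snd '' P = {y | y ∈ L ∧ Coll 𝓛 x y} := by
    ext y
    simp only [Set.mem_image, Set.mem_setOf_eq, hP, Prod.exists, Coll]
    constructor
    · rintro ⟨M, y', ⟨h1, h2, h3, h4⟩, rfl⟩
      exact ⟨h3, M, h1, h2, h4⟩
    · rintro ⟨h3, M, h1, h2, h4⟩
      exact ⟨M, y, ⟨h1, h2, h3, h4⟩, rfl⟩
  have hfst : Set.InjOn Prod.fst P := by
    rintro ⟨M, y⟩ hp ⟨M', y'⟩ hq (h : M = M')
    subst h
    obtain ⟨hM, hxM, hyL, hyM⟩ := hp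
    obtain ⟨-, -, hy'L, hy'M⟩ := hq
    have := eq_or_eq hpg hL hM hyL hyM hy'L hy'M
    rcases this with h | h
    · exact Prod.ext rfl h
    · exact absurd (h ▸ hxM) hx
  have hsnd : Set.InjOn Prod.snd P := by
    rintro ⟨M, y⟩ hp ⟨M', y'⟩ hq (h : y = y')
    subst h
    obtain ⟨hM, hxM, hyL, hyM⟩ := hp
    obtain ⟨hM', hxM', -, hyM'⟩ := hq
    have := eq_or_eq hpg hM hM' hxM hxM' hyM hyM'
    rcases this with h | h
    · exact absurd (h ▸ hyL) hx
    · exact Prod.ext h rfl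
  calc {y | y ∈ L ∧ Coll 𝓛 x y}.ncard = P.ncard := by
        rw [← h2, Set.ncard_image_of_injOn hsnd]
    _ = α := by rw [← Set.ncard_image_of_injOn hfst, h1, hpg.alpha_ax x L hL hx]

/-- generic fiberwise counting -/
lemma pair_count {β γ : Type*} [DecidableEq β]
    (P : Finset (β × γ)) (I : Finset β) (c : ℕ)
    (hmem : ∀ p ∈ P, p.1 ∈ I)
    (hfiber : ∀ b ∈ I, (P.filter (fun p => p.1 = b)).card = c) :
    P.card = I.card * c := by
  rw [Finset.card_eq_sum_card_fiberwise hmem, Finset.sum_congr rfl hfiber,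
    Finset.sum_const, smul_eq_mul]

/-- generic fiberwise counting, second coordinate -/
lemma pair_count_snd {β γ : Type*} [DecidableEq γ]
    (P : Finset (β × γ)) (I : Finset γ) (c : ℕ)
    (hmem : ∀ p ∈ P, p.2 ∈ I)
    (hfiber : ∀ b ∈ I, (P.filter (fun p => p.2 = b)).card = c) :
    P.card = I.card * c := by
  rw [Finset.card_eq_sum_card_fiberwise hmem, Finset.sum_congr rfl hfiber,
    Finset.sum_const, smul_eq_mul]

end PGaux

namespace PGaux

variable {G : Type*} [CommGroup G] [Fintype G] [DecidableEq G]
variable {𝓛 : Set (Finset G)} {s t α : ℕ}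

/-- count of the union of lines through 1, minus 1 -/
lemma ncard_D (hpg : IsPGSinger G 𝓛 s t α) :
    {g : G | g ≠ 1 ∧ Coll 𝓛 1 g}.ncard = (t + 1) * s := by
  classical
  set ℐ : Finset (Finset G) := (Set.toFinite {L | L ∈ 𝓛 ∧ (1 : G) ∈ L}).toFinset with hℐ
  have hℐcard : ℐ.card = t + 1 := by
    rw [hℐ, ← Set.ncard_eq_toFinset_card _ _, hpg.point_deg 1]
  set P : Finset (Finset G × G) :=
    Finset.univ.filter (fun p => p.1 ∈ 𝓛 ∧ (1 : G) ∈ p.1 ∧ p.2 ∈ p.1 ∧ p.2 ≠ 1) with hPd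
  have hmem : ∀ p ∈ P, p.1 ∈ ℐ := by
    intro p hp
    simp only [hPd, Finset.mem_filter] at hp
    simp only [hℐ, Set.Finite.mem_toFinset, Set.mem_setOf_eq]
    exact ⟨hp.2.1, hp.2.2.1⟩
  have hfiber : ∀ L ∈ ℐ, (P.filter (fun p => p.1 = L)).card = s := by
    intro L hLmem
    simp only [hℐ, Set.Finite.mem_toFinset, Set.mem_setOf_eq] at hLmem
    obtain ⟨hL, h1L⟩ := hLmem
    have heq : P.filter (fun p => p.1 = L) = (L.erase 1).image (fun y => (L, y)) := by
      ext ⟨M, y⟩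
      simp only [hPd, Finset.mem_filter, Finset.mem_univ, true_and, Finset.mem_image,
        Finset.mem_erase, Prod.mk.injEq]
      constructor
      · rintro ⟨⟨hM, h1M, hyM, hy1⟩, rfl⟩
        exact ⟨y, ⟨hy1, hyM⟩, rfl, rfl⟩
      · rintro ⟨y', ⟨hy1, hyL⟩, rfl, rfl⟩
        exact ⟨⟨hL, h1L, hyL, hy1⟩, rfl⟩
    rw [heq, Finset.card_image_of_injective _ (fun a b h => (Prod.mk.injEq _ _ _ _ ▸ h).2),
      Finset.card_erase_of_mem h1L, hpg.line_card L hL]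
    omega
  have hPcard : P.card = (t + 1) * s := by
    rw [pair_count P ℐ s hmem hfiber, hℐcard]
  have himg : Prod.snd '' (P : Set (Finset G × G)) = {g : G | g ≠ 1 ∧ Coll 𝓛 1 g} := by
    ext g
    simp only [Set.mem_image, Finset.coe_filter, Set.mem_setOf_eq, hPd, Finset.mem_univ,
      true_and, Prod.exists, Coll]
    constructor
    · rintro ⟨L, g', ⟨hL, h1L, hgL, hg1⟩, rfl⟩
      exact ⟨hg1, L, hL, h1L, hgL⟩
    · rintro ⟨hg1, L, hL, h1L, hgL⟩
      exact ⟨L, g, ⟨hL, h1L, hgL, hg1⟩, rfl⟩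
  have hinj : Set.InjOn Prod.snd (P : Set (Finset G × G)) := by
    rintro ⟨M, y⟩ hp ⟨M', y'⟩ hq (h : y = y')
    subst h
    simp only [Finset.mem_coe, hPd, Finset.mem_filter] at hp hq
    obtain ⟨-, hM, h1M, hyM, hy1⟩ := hp
    obtain ⟨-, hM', h1M', hyM', -⟩ := hq
    rcases eq_or_eq hpg hM hM' h1M h1M' hyM hyM' with h | h
    · exact absurd h.symm hy1
    · exact Prod.ext h rfl
  rw [← himg, Set.ncard_image_of_injOn hinj, Set.ncard_coe_finset, hPcard]

end PGaux

namespace PGaux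

variable {G : Type*} [CommGroup G] [Fintype G] [DecidableEq G]
variable {𝓛 : Set (Finset G)} {s t α : ℕ}

/-- μ-type count: if `x` is not collinear with `1`, the number of points collinear with
both `1` and `x` is `(t+1)·α`. -/
lemma ncard_mu (hpg : IsPGSinger G 𝓛 s t α) {x : G} (hx : ¬ Coll 𝓛 1 x) :
    {h : G | Coll 𝓛 1 h ∧ Coll 𝓛 x h}.ncard = (t + 1) * α := by
  classical
  set ℐ : Finset (Finset G) := (Set.toFinite {L | L ∈ 𝓛 ∧ (1 : G) ∈ L}).toFinset with hℐ
  have hℐcard : ℐ.card = t + 1 := by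
    rw [hℐ, ← Set.ncard_eq_toFinset_card _ _, hpg.point_deg 1]
  set P : Finset (Finset G × G) :=
    Finset.univ.filter (fun p => p.1 ∈ 𝓛 ∧ (1 : G) ∈ p.1 ∧ p.2 ∈ p.1 ∧ Coll 𝓛 x p.2) with hPd
  have hmem : ∀ p ∈ P, p.1 ∈ ℐ := by
    intro p hp
    simp only [hPd, Finset.mem_filter] at hp
    simp only [hℐ, Set.Finite.mem_toFinset, Set.mem_setOf_eq]
    exact ⟨hp.2.1, hp.2.2.1⟩
  have hfiber : ∀ L ∈ ℐ, (P.filter (fun p => p.1 = L)).card = α := by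
    intro L hLmem
    simp only [hℐ, Set.Finite.mem_toFinset, Set.mem_setOf_eq] at hLmem
    obtain ⟨hL, h1L⟩ := hLmem
    have hxL : x ∉ L := fun hxL => hx ⟨L, hL, h1L, hxL⟩
    have heq : P.filter (fun p => p.1 = L)
        = (L.filter (fun y => Coll 𝓛 x y)).image (fun y => (L, y)) := by
      ext ⟨M, y⟩
      simp only [hPd, Finset.mem_filter, Finset.mem_univ, true_and, Finset.mem_image,
        Prod.mk.injEq]
      constructor
      · rintro ⟨⟨hM, h1M, hyM, hcy⟩, rfl⟩
        exact ⟨y, ⟨hyM, hcy⟩, rfl, rfl⟩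
      · rintro ⟨y', ⟨hyL, hcy⟩, rfl, rfl⟩
        exact ⟨⟨hL, h1L, hyL, hcy⟩, rfl⟩
    have hcard : (L.filter (fun y => Coll 𝓛 x y)).card = α := by
      have : ((L.filter (fun y => Coll 𝓛 x y) : Finset G) : Set G)
          = {y : G | y ∈ L ∧ Coll 𝓛 x y} := by
        ext y; simp [Finset.mem_filter]
      rw [← Set.ncard_coe_finset, this, points_on_line_coll hpg hL hxL]
    rw [heq, Finset.card_image_of_injective _ (fun a b h => (Prod.mk.injEq _ _ _ _ ▸ h).2),
      hcard]
  have hPcard : P.card = (t + 1) * α := by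
    rw [pair_count P ℐ α hmem hfiber, hℐcard]
  have himg : Prod.snd '' (P : Set (Finset G × G)) = {h : G | Coll 𝓛 1 h ∧ Coll 𝓛 x h} := by
    ext g
    simp only [Set.mem_image, Finset.mem_coe, hPd, Finset.mem_filter, Finset.mem_univ,
      true_and, Set.mem_setOf_eq, Prod.exists]
    constructor
    · rintro ⟨L, g', ⟨hL, h1L, hgL, hc⟩, rfl⟩
      exact ⟨⟨L, hL, h1L, hgL⟩, hc⟩
    · rintro ⟨⟨L, hL, h1L, hgL⟩, hc⟩
      exact ⟨L, g, ⟨hL, h1L, hgL, hc⟩, rfl⟩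
  have hinj : Set.InjOn Prod.snd (P : Set (Finset G × G)) := by
    rintro ⟨M, y⟩ hp ⟨M', y'⟩ hq (h : y = y')
    subst h
    simp only [Finset.mem_coe, hPd, Finset.mem_filter] at hp hq
    obtain ⟨-, hM, h1M, hyM, hcy⟩ := hp
    obtain ⟨-, hM', h1M', hyM', -⟩ := hq
    have hy1 : y ≠ 1 := by
      rintro rfl
      exact hx (coll_comm hcy)
    rcases eq_or_eq hpg hM hM' h1M h1M' hyM hyM' with h | h
    · exact absurd h.symm hy1
    · exact Prod.ext h rfl
  rw [← himg, Set.ncard_image_of_injOn hinj, Set.ncard_coe_finset, hPcard]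

end PGaux

namespace PGaux

variable {G : Type*} [CommGroup G] [Fintype G] [DecidableEq G]
variable {𝓛 : Set (Finset G)} {s t α : ℕ}

/-- λ-type count: if `x ≠ 1` is collinear with `1`, the number of points other than `1,x`
collinear with both `1` and `x` is `(s-1) + t·(α-1)`. -/
lemma ncard_lam (hpg : IsPGSinger G 𝓛 s t α) {x : G} (hx1 : x ≠ 1) (hcx : Coll 𝓛 1 x) :
    {h : G | h ≠ 1 ∧ h ≠ x ∧ Coll 𝓛 1 h ∧ Coll 𝓛 x h}.ncard = (s - 1) + t * (α - 1) := by
  classical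
  obtain ⟨L0, hL0, h1L0, hxL0⟩ := hcx
  set ℐ : Finset (Finset G) := (Set.toFinite {L | L ∈ 𝓛 ∧ (1 : G) ∈ L}).toFinset with hℐ
  have hℐcard : ℐ.card = t + 1 := by
    rw [hℐ, ← Set.ncard_eq_toFinset_card _ _, hpg.point_deg 1]
  have hL0ℐ : L0 ∈ ℐ := by
    simp only [hℐ, Set.Finite.mem_toFinset, Set.mem_setOf_eq]
    exact ⟨hL0, h1L0⟩
  set A : Finset G := (L0.erase 1).erase x with hA
  have hAcard : A.card = s - 1 := by
    rw [hA, Finset.card_erase_of_mem (Finset.mem_erase.mpr ⟨hx1, hxL0⟩),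
      Finset.card_erase_of_mem h1L0, hpg.line_card L0 hL0]
    omega
  set P : Finset (Finset G × G) :=
    Finset.univ.filter (fun p => p.1 ∈ 𝓛 ∧ (1 : G) ∈ p.1 ∧ p.1 ≠ L0 ∧ p.2 ∈ p.1 ∧
      p.2 ≠ 1 ∧ Coll 𝓛 x p.2) with hPd
  have hmem : ∀ p ∈ P, p.1 ∈ ℐ.erase L0 := by
    intro p hp
    simp only [hPd, Finset.mem_filter] at hp
    refine Finset.mem_erase.mpr ⟨hp.2.2.2.1, ?_⟩
    simp only [hℐ, Set.Finite.mem_toFinset, Set.mem_setOf_eq]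
    exact ⟨hp.2.1, hp.2.2.1⟩
  have hfiber : ∀ L ∈ ℐ.erase L0, (P.filter (fun p => p.1 = L)).card = α - 1 := by
    intro L hLmem
    obtain ⟨hne, hLmem⟩ := Finset.mem_erase.mp hLmem
    simp only [hℐ, Set.Finite.mem_toFinset, Set.mem_setOf_eq] at hLmem
    obtain ⟨hL, h1L⟩ := hLmem
    have hxL : x ∉ L := by
      intro hxL
      rcases eq_or_eq hpg hL hL0 h1L h1L0 hxL hxL0 with h | h
      · exact hx1 h.symm
      · exact hne h
    have heq : P.filter (fun p => p.1 = L)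
        = ((L.filter (fun y => Coll 𝓛 x y)).erase 1).image (fun y => (L, y)) := by
      ext ⟨M, y⟩
      simp only [hPd, Finset.mem_filter, Finset.mem_univ, true_and, Finset.mem_image,
        Finset.mem_erase, Prod.mk.injEq]
      constructor
      · rintro ⟨⟨hM, h1M, hMne, hyM, hy1, hcy⟩, rfl⟩
        exact ⟨y, ⟨hy1, hyM, hcy⟩, rfl, rfl⟩
      · rintro ⟨y', ⟨hy1, hyL, hcy⟩, rfl, rfl⟩
        exact ⟨⟨hL, h1L, hne, hyL, hy1, hcy⟩, rfl⟩
    have hcard : (L.filter (fun y => Coll 𝓛 x y)).card = α := by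
      have : ((L.filter (fun y => Coll 𝓛 x y) : Finset G) : Set G)
          = {y : G | y ∈ L ∧ Coll 𝓛 x y} := by
        ext y; simp [Finset.mem_filter]
      rw [← Set.ncard_coe_finset, this, points_on_line_coll hpg hL hxL]
    have h1mem : (1 : G) ∈ L.filter (fun y => Coll 𝓛 x y) :=
      Finset.mem_filter.mpr ⟨h1L, ⟨L0, hL0, hxL0, h1L0⟩⟩
    rw [heq, Finset.card_image_of_injective _ (fun a b h => (Prod.mk.injEq _ _ _ _ ▸ h).2),
      Finset.card_erase_of_mem h1mem, hcard]
  have hPcard : P.card = t * (α - 1) := by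
    rw [pair_count P (ℐ.erase L0) (α - 1) hmem hfiber,
      Finset.card_erase_of_mem hL0ℐ, hℐcard]
    congr 1
  have himg : Prod.snd '' (P : Set (Finset G × G))
      = {h : G | h ∉ L0 ∧ Coll 𝓛 1 h ∧ Coll 𝓛 x h} := by
    ext g
    simp only [Set.mem_image, Finset.mem_coe, hPd, Finset.mem_filter, Finset.mem_univ,
      true_and, Set.mem_setOf_eq, Prod.exists]
    constructor
    · rintro ⟨L, g', ⟨hL, h1L, hLne, hgL, hg1, hc⟩, rfl⟩
      refine ⟨?_, ⟨L, hL, h1L, hgL⟩, hc⟩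
      intro hgL0
      rcases eq_or_eq hpg hL hL0 h1L h1L0 hgL hgL0 with h | h
      · exact hg1 h.symm
      · exact hLne h
    · rintro ⟨hgL0, ⟨L, hL, h1L, hgL⟩, hc⟩
      have hg1 : g ≠ 1 := fun h => hgL0 (h ▸ h1L0)
      have hLne : L ≠ L0 := fun h => hgL0 (h ▸ hgL)
      exact ⟨L, g, ⟨hL, h1L, hLne, hgL, hg1, hc⟩, rfl⟩
  have hinj : Set.InjOn Prod.snd (P : Set (Finset G × G)) := by
    rintro ⟨M, y⟩ hp ⟨M', y'⟩ hq (h : y = y')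
    subst h
    simp only [Finset.mem_coe, hPd, Finset.mem_filter] at hp hq
    obtain ⟨-, hM, h1M, -, hyM, hy1, -⟩ := hp
    obtain ⟨-, hM', h1M', -, hyM', -, -⟩ := hq
    rcases eq_or_eq hpg hM hM' h1M h1M' hyM hyM' with h | h
    · exact absurd h.symm hy1
    · exact Prod.ext h rfl
  have hsplit : {h : G | h ≠ 1 ∧ h ≠ x ∧ Coll 𝓛 1 h ∧ Coll 𝓛 x h}
      = (A : Set G) ∪ Prod.snd '' (P : Set (Finset G × G)) := by
    rw [himg]
    ext h
    simp only [Set.mem_setOf_eq, Set.mem_union, hA, Finset.mem_coe, Finset.mem_erase]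
    constructor
    · rintro ⟨h1, hx', c1, cx⟩
      by_cases hL0m : h ∈ L0
      · exact Or.inl ⟨hx', h1, hL0m⟩
      · exact Or.inr ⟨hL0m, c1, cx⟩
    · rintro (⟨hx', h1, hL0m⟩ | ⟨hL0m, c1, cx⟩)
      · exact ⟨h1, hx', ⟨L0, hL0, h1L0, hL0m⟩, ⟨L0, hL0, hxL0, hL0m⟩⟩
      · exact ⟨fun h' => hL0m (h' ▸ h1L0), fun h' => hL0m (h' ▸ hxL0), c1, cx⟩
  have hdisj : Disjoint (A : Set G) (Prod.snd '' (P : Set (Finset G × G))) := by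
    rw [himg]
    rw [Set.disjoint_left]
    intro a ha hb
    simp only [hA, Finset.mem_coe, Finset.mem_erase] at ha
    exact hb.1 ha.2.2
  rw [hsplit, Set.ncard_union_eq hdisj (Set.toFinite _) (Set.toFinite _),
    Set.ncard_coe_finset, hAcard, Set.ncard_image_of_injOn hinj, Set.ncard_coe_finset,
    hPcard]

end PGaux

namespace PGaux

variable {G : Type*} [CommGroup G] [Fintype G] [DecidableEq G]
variable {𝓛 : Set (Finset G)} {s t α : ℕ}

lemma card_eq (hpg : IsPGSinger G 𝓛 s t α) :
    α * Fintype.card G = (s + 1) * (s * t + α) := by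
  classical
  have hne : {L | L ∈ 𝓛 ∧ (1 : G) ∈ L}.Nonempty := by
    have h : 0 < {L | L ∈ 𝓛 ∧ (1 : G) ∈ L}.ncard := by rw [hpg.point_deg 1]; omega
    exact (Set.ncard_pos (Set.toFinite _)).mp h
  obtain ⟨L0, hL0, h1L0⟩ := hne
  set v := Fintype.card G with hv
  -- lines other than L0 that meet L0
  set 𝓜 : Finset (Finset G) :=
    Finset.univ.filter (fun N => N ∈ 𝓛 ∧ N ≠ L0 ∧ ∃ q ∈ L0, q ∈ N) with h𝓜
  set R : Finset (G × Finset G) :=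
    Finset.univ.filter (fun p => p.1 ∈ L0 ∧ p.2 ∈ 𝓛 ∧ p.2 ≠ L0 ∧ p.1 ∈ p.2) with hRd
  have hmemR : ∀ p ∈ R, p.1 ∈ L0 := by
    intro p hp
    simp only [hRd, Finset.mem_filter] at hp
    exact hp.2.1
  have hfiberR : ∀ q ∈ L0, (R.filter (fun p => p.1 = q)).card = t := by
    intro q hq
    set 𝒯 : Finset (Finset G) := (Set.toFinite {M | M ∈ 𝓛 ∧ q ∈ M}).toFinset with h𝒯
    have h𝒯card : 𝒯.card = t + 1 := by
      rw [h𝒯, ← Set.ncard_eq_toFinset_card _ _, hpg.point_deg q]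
    have hL0𝒯 : L0 ∈ 𝒯 := by
      simp only [h𝒯, Set.Finite.mem_toFinset, Set.mem_setOf_eq]
      exact ⟨hL0, hq⟩
    have heq : R.filter (fun p => p.1 = q) = (𝒯.erase L0).image (fun N => (q, N)) := by
      ext ⟨y, N⟩
      simp only [hRd, Finset.mem_filter, Finset.mem_univ, true_and, Finset.mem_image,
        Finset.mem_erase, h𝒯, Set.Finite.mem_toFinset, Set.mem_setOf_eq, Prod.mk.injEq]
      constructor
      · rintro ⟨⟨hyL0, hN, hNe, hyN⟩, rfl⟩
        exact ⟨N, ⟨hNe, hN, hyN⟩, rfl, rfl⟩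
      · rintro ⟨N', ⟨hNe, hN, hqN⟩, rfl, rfl⟩
        exact ⟨⟨hq, hN, hNe, hqN⟩, rfl⟩
    rw [heq, Finset.card_image_of_injective _ (fun a b h => (Prod.mk.injEq _ _ _ _ ▸ h).2),
      Finset.card_erase_of_mem hL0𝒯, h𝒯card]
    omega
  have hRcard : R.card = (s + 1) * t := by
    rw [pair_count R L0 t hmemR hfiberR, hpg.line_card L0 hL0]
  have himgR : Prod.snd '' (R : Set (G × Finset G)) = (𝓜 : Set (Finset G)) := by
    ext N
    simp only [Set.mem_image, Finset.mem_coe, hRd, h𝓜, Finset.mem_filter, Finset.mem_univ,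
      true_and, Prod.exists]
    constructor
    · rintro ⟨q, N', ⟨hqL0, hN, hNe, hqN⟩, rfl⟩
      exact ⟨hN, hNe, q, hqL0, hqN⟩
    · rintro ⟨hN, hNe, q, hqL0, hqN⟩
      exact ⟨q, N, ⟨hqL0, hN, hNe, hqN⟩, rfl⟩
  have hinjR : Set.InjOn Prod.snd (R : Set (G × Finset G)) := by
    rintro ⟨q, N⟩ hp ⟨q', N'⟩ hq' (h : N = N')
    subst h
    simp only [Finset.mem_coe, hRd, Finset.mem_filter] at hp hq'
    obtain ⟨-, hqL0, hN, hNe, hqN⟩ := hp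
    obtain ⟨-, hq'L0, -, -, hq'N⟩ := hq'
    rcases eq_or_eq hpg hL0 hN hqL0 hqN hq'L0 hq'N with h | h
    · exact Prod.ext h rfl
    · exact absurd h.symm hNe
  have h𝓜card : 𝓜.card = (s + 1) * t := by
    rw [← Set.ncard_coe_finset, ← himgR, Set.ncard_image_of_injOn hinjR,
      Set.ncard_coe_finset, hRcard]
  -- the big incidence count
  set Q : Finset (G × Finset G) :=
    Finset.univ.filter (fun p => p.2 ∈ 𝓛 ∧ p.1 ∈ p.2 ∧ p.1 ∉ L0 ∧ ∃ q ∈ L0, q ∈ p.2) with hQd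
  set I₁ : Finset G := Finset.univ.filter (fun y => y ∉ L0) with hI₁
  have hI₁card : I₁.card = v - (s + 1) := by
    have : I₁ = Finset.univ \ L0 := by
      ext y; simp [hI₁]
    rw [this, Finset.card_sdiff_of_subset (Finset.subset_univ L0), Finset.card_univ,
      hpg.line_card L0 hL0]
  have hmem1 : ∀ p ∈ Q, p.1 ∈ I₁ := by
    intro p hp
    simp only [hQd, Finset.mem_filter] at hp
    simp only [hI₁, Finset.mem_filter, Finset.mem_univ, true_and]
    exact hp.2.2.2.1
  have hfiber1 : ∀ y ∈ I₁, (Q.filter (fun p => p.1 = y)).card = α := by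
    intro y hy
    simp only [hI₁, Finset.mem_filter, Finset.mem_univ, true_and] at hy
    set 𝒜 : Finset (Finset G) :=
      (Set.toFinite {M | M ∈ 𝓛 ∧ y ∈ M ∧ ∃ q ∈ L0, q ∈ M}).toFinset with h𝒜
    have h𝒜card : 𝒜.card = α := by
      rw [h𝒜, ← Set.ncard_eq_toFinset_card _ _, hpg.alpha_ax y L0 hL0 hy]
    have heq : Q.filter (fun p => p.1 = y) = 𝒜.image (fun N => (y, N)) := by
      ext ⟨y', N⟩
      simp only [hQd, Finset.mem_filter, Finset.mem_univ, true_and, Finset.mem_image,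
        h𝒜, Set.Finite.mem_toFinset, Set.mem_setOf_eq, Prod.mk.injEq]
      constructor
      · rintro ⟨⟨hN, hyN, hyL0, hmeets⟩, rfl⟩
        exact ⟨N, ⟨hN, hyN, hmeets⟩, rfl, rfl⟩
      · rintro ⟨N', ⟨hN, hyN, hmeets⟩, rfl, rfl⟩
        exact ⟨⟨hN, hyN, hy, hmeets⟩, rfl⟩
    rw [heq, Finset.card_image_of_injective _ (fun a b h => (Prod.mk.injEq _ _ _ _ ▸ h).2),
      h𝒜card]
  have hQcard1 : Q.card = (v - (s + 1)) * α := by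
    rw [pair_count Q I₁ α hmem1 hfiber1, hI₁card]
  have hmem2 : ∀ p ∈ Q, p.2 ∈ 𝓜 := by
    intro p hp
    simp only [hQd, Finset.mem_filter] at hp
    obtain ⟨-, hN, hyN, hyL0, hmeets⟩ := hp
    simp only [h𝓜, Finset.mem_filter, Finset.mem_univ, true_and]
    exact ⟨hN, fun h => hyL0 (h ▸ hyN), hmeets⟩
  have hfiber2 : ∀ N ∈ 𝓜, (Q.filter (fun p => p.2 = N)).card = s := by
    intro N hN𝓜
    simp only [h𝓜, Finset.mem_filter, Finset.mem_univ, true_and] at hN𝓜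
    obtain ⟨hN, hNe, q, hqL0, hqN⟩ := hN𝓜
    have heq : Q.filter (fun p => p.2 = N) = (N \ L0).image (fun y => (y, N)) := by
      ext ⟨y, N'⟩
      simp only [hQd, Finset.mem_filter, Finset.mem_univ, true_and, Finset.mem_image,
        Finset.mem_sdiff, Prod.mk.injEq]
      constructor
      · rintro ⟨⟨hN', hyN, hyL0, hmeets⟩, rfl⟩
        exact ⟨y, ⟨hyN, hyL0⟩, rfl, rfl⟩
      · rintro ⟨y', ⟨hyN, hyL0⟩, rfl, rfl⟩
        exact ⟨⟨hN, hyN, hyL0, q, hqL0, hqN⟩, rfl⟩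
    have hint : (N ∩ L0).card = 1 := by
      have hle : (N ∩ L0).card ≤ 1 := by
        have h := hpg.line_inter N hN L0 hL0 hNe
        rwa [← Finset.coe_inter, Set.ncard_coe_finset] at h
      have hpos : 0 < (N ∩ L0).card :=
        Finset.card_pos.mpr ⟨q, Finset.mem_inter.mpr ⟨hqN, hqL0⟩⟩
      omega
    have hsd : (N \ L0).card = s := by
      have h := Finset.card_inter_add_card_sdiff N L0
      rw [hint, hpg.line_card N hN] at h
      omega
    rw [heq, Finset.card_image_of_injective _ (fun a b h => (Prod.mk.injEq _ _ _ _ ▸ h).1),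
      hsd]
  have hQcard2 : Q.card = (s + 1) * t * s := by
    rw [pair_count_snd Q 𝓜 s hmem2 hfiber2, h𝓜card]
  have hle : s + 1 ≤ v := by
    rw [hv]
    have h := Finset.card_le_univ L0
    rwa [hpg.line_card L0 hL0] at h
  have h1 : (v - (s + 1)) * α = (s + 1) * t * s := by rw [← hQcard1, hQcard2]
  have h2 : v - (s + 1) + (s + 1) = v := Nat.sub_add_cancel hle
  calc α * v = α * ((v - (s + 1)) + (s + 1)) := by rw [h2]
    _ = (v - (s + 1)) * α + α * (s + 1) := by ring
    _ = (s + 1) * t * s + α * (s + 1) := by rw [h1]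
    _ = (s + 1) * (s * t + α) := by ring

end PGaux

namespace PGaux

variable {G : Type*} [CommGroup G] [Fintype G] [DecidableEq G]
variable {𝓛 : Set (Finset G)} {s t α : ℕ}

lemma coll_one_inv (hpg : IsPGSinger G 𝓛 s t α) {z : G} (h : Coll 𝓛 1 z) :
    Coll 𝓛 1 z⁻¹ := by
  have h2 := coll_mul hpg z⁻¹ h
  simp only [mul_one, inv_mul_cancel] at h2
  exact coll_comm h2

end PGaux

/-- if `(G,𝓛)` is a `pg(s,t,α)` with abelian Singer group `G`, then the union
of the `t+1` lines through the identity, with the identity removed, is a regular partial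
difference set with parameters `v = (s+1)(st+α)/α`, `k = s(t+1)`, `λ = s-1+t(α-1)`,
`μ = α(t+1)`. -/
theorem pds_from_partial_geometry_singer
    (G : Type*) [CommGroup G] [Fintype G] [DecidableEq G]
    (s t α : ℕ) (hs : 0 < s) (ht : 0 < t) (hα : 0 < α)
    (𝓛 : Set (Finset G)) (hpg : IsPGSinger G 𝓛 s t α)
    (D : Set G) (hD : D = {g : G | g ≠ 1 ∧ ∃ L ∈ 𝓛, (1 : G) ∈ L ∧ g ∈ L}) :
    α ∣ (s + 1) * (s * t + α) ∧
    IsPDS D ((s + 1) * (s * t + α) / α) (s * (t + 1)) (s - 1 + t * (α - 1)) (α * (t + 1)) ∧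
    IsRegularPDS D := by
  classical
  have hmemD : ∀ g : G, g ∈ D ↔ g ≠ 1 ∧ PGaux.Coll 𝓛 1 g := by
    intro g; rw [hD]; exact Iff.rfl
  have hDc : D = {g : G | g ≠ 1 ∧ PGaux.Coll 𝓛 1 g} := hD
  have hv := PGaux.card_eq hpg
  -- reduction of the pair counts
  have hpairs : ∀ z : G, z ≠ 1 →
      {p : G × G | p.1 ∈ D ∧ p.2 ∈ D ∧ p.1 ≠ p.2 ∧ p.1 * p.2⁻¹ = z}.ncard
        = {h : G | h ∈ D ∧ z * h ∈ D}.ncard := by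
    intro z hz
    have himg : (fun h : G => (z * h, h)) '' {h : G | h ∈ D ∧ z * h ∈ D}
        = {p : G × G | p.1 ∈ D ∧ p.2 ∈ D ∧ p.1 ≠ p.2 ∧ p.1 * p.2⁻¹ = z} := by
      ext ⟨g, h⟩
      simp only [Set.mem_image, Set.mem_setOf_eq, Prod.mk.injEq]
      constructor
      · rintro ⟨h', ⟨hh, hzh⟩, rfl, rfl⟩
        refine ⟨hzh, hh, ?_, by rw [mul_inv_cancel_right]⟩
        intro he
        exact hz (mul_eq_right.mp he)
      · rintro ⟨hg, hh, hne, heq⟩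
        have hg' : g = z * h := by rw [← heq, inv_mul_cancel_right]
        exact ⟨h, ⟨hh, hg' ▸ hg⟩, hg'.symm, rfl⟩
    rw [← himg,
      Set.ncard_image_of_injective _ (fun a b hab => (Prod.mk.injEq _ _ _ _ ▸ hab).2)]
  refine ⟨⟨Fintype.card G, hv.symm⟩, ⟨?_, ?_, ?_, ?_⟩, ?_, ?_⟩
  · -- v
    rw [Nat.card_eq_fintype_card, ← hv, Nat.mul_div_cancel_left _ hα]
  · -- k
    rw [hDc, PGaux.ncard_D hpg, Nat.mul_comm]
  · -- λ
    intro z hz hzD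
    have hcz : PGaux.Coll 𝓛 1 z := ((hmemD z).mp hzD).2
    have hczi : PGaux.Coll 𝓛 1 z⁻¹ := PGaux.coll_one_inv hpg hcz
    have hTset : {h : G | h ∈ D ∧ z * h ∈ D}
        = {h : G | h ≠ 1 ∧ h ≠ z⁻¹ ∧ PGaux.Coll 𝓛 1 h ∧ PGaux.Coll 𝓛 z⁻¹ h} := by
      ext h
      simp only [Set.mem_setOf_eq, hmemD]
      constructor
      · rintro ⟨⟨h1, c1⟩, hzh1, czh⟩
        refine ⟨h1, ?_, c1, ?_⟩
        · rintro rfl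
          exact hzh1 (mul_inv_cancel z)
        · have h2 := PGaux.coll_mul hpg z⁻¹ czh
          simpa only [mul_one, inv_mul_cancel_left] using h2
      · rintro ⟨h1, hzi, c1, cx⟩
        refine ⟨⟨h1, c1⟩, ?_, ?_⟩
        · intro he
          exact hzi (eq_inv_of_mul_eq_one_right he)
        · have h2 := PGaux.coll_mul hpg z cx
          simpa only [mul_inv_cancel] using h2
    rw [hpairs z hz, hTset]
    exact PGaux.ncard_lam hpg (inv_ne_one.mpr hz) hczi
  · -- μ
    intro z hz hzD
    have hnc : ¬ PGaux.Coll 𝓛 1 z := by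
      intro hc
      exact hzD ((hmemD z).mpr ⟨hz, hc⟩)
    have hnci : ¬ PGaux.Coll 𝓛 1 z⁻¹ := by
      intro hc
      have := PGaux.coll_one_inv hpg hc
      rw [inv_inv] at this
      exact hnc this
    have hTset : {h : G | h ∈ D ∧ z * h ∈ D}
        = {h : G | PGaux.Coll 𝓛 1 h ∧ PGaux.Coll 𝓛 z⁻¹ h} := by
      ext h
      simp only [Set.mem_setOf_eq, hmemD]
      constructor
      · rintro ⟨⟨h1, c1⟩, hzh1, czh⟩
        refine ⟨c1, ?_⟩
        have h2 := PGaux.coll_mul hpg z⁻¹ czh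
        simpa only [mul_one, inv_mul_cancel_left] using h2
      · rintro ⟨c1, cx⟩
        have h1 : h ≠ 1 := by
          rintro rfl
          exact hnci (PGaux.coll_comm cx)
        have hzi : h ≠ z⁻¹ := by
          rintro rfl
          exact hnci c1
        refine ⟨⟨h1, c1⟩, ?_, ?_⟩
        · intro he
          exact hzi (eq_inv_of_mul_eq_one_right he)
        · have h2 := PGaux.coll_mul hpg z cx
          simpa only [mul_inv_cancel] using h2
    rw [hpairs z hz, hTset, PGaux.ncard_mu hpg hnci, Nat.mul_comm]
  · -- 1 ∉ D
    intro h1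
    exact ((hmemD 1).mp h1).1 rfl
  · -- closed under inverses
    intro g hg
    obtain ⟨hg1, hc⟩ := (hmemD g).mp hg
    exact (hmemD g⁻¹).mpr ⟨inv_ne_one.mpr hg1, PGaux.coll_one_inv hpg hc⟩
end

section
/- Let s, t, α be positive integers with 2 ≤ α, α < s and α < t, and let G be a finite abelian group with line set 𝓛 making (G,𝓛) a proper partial geometry pg(s,t,α) admitting G as an abelian Singer group, such that the pair is of rigid type (axioms (i)–(vi) of the encoding). Then (s + t − α + 1) divides (s+1)(t+1). -/
/-- (vi) The pair `(S,G)` is of rigid type: every line has trivial stabilizer in `G`. -/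
def RigidType (G : Type*) [CommGroup G] [DecidableEq G] (𝓛 : Set (Finset G)) : Prop :=
  ∀ g : G, ∀ L ∈ 𝓛, L.image (fun y => g * y) = L → g = 1

set_option linter.unusedSectionVars false

open Finset

section Geometry

variable {G : Type*} [CommGroup G] [Fintype G] [DecidableEq G]
variable {s t α : ℕ} {𝓛 : Set (Finset G)}

open scoped Classical

/-- collinearity relation -/
def adjP (𝓛 : Set (Finset G)) (x y : G) : Prop :=
  x ≠ y ∧ ∃ L ∈ 𝓛, x ∈ L ∧ y ∈ L

lemma adjP_symm {x y : G} (h : adjP 𝓛 x y) : adjP 𝓛 y x := by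
  obtain ⟨hne, L, hL, hx, hy⟩ := h
  exact ⟨hne.symm, L, hL, hy, hx⟩

lemma adjP_irrefl (x : G) : ¬ adjP 𝓛 x x := fun h => h.1 rfl

lemma adjP_translate (g : G) {x y : G} (hpg : IsPGSinger G 𝓛 s t α) (h : adjP 𝓛 x y) :
    adjP 𝓛 (g * x) (g * y) := by
  obtain ⟨hne, L, hL, hx, hy⟩ := h
  refine ⟨by simpa using hne, L.image (fun z => g * z), hpg.translate g L hL, ?_, ?_⟩
  · exact Finset.mem_image_of_mem _ hx
  · exact Finset.mem_image_of_mem _ hy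

lemma adjP_translate_iff (g : G) {x y : G} (hpg : IsPGSinger G 𝓛 s t α) :
    adjP 𝓛 (g * x) (g * y) ↔ adjP 𝓛 x y := by
  constructor
  · intro h
    have := adjP_translate g⁻¹ hpg h
    simpa using this
  · exact adjP_translate g hpg

/-- two distinct points lie on at most one line -/
lemma line_unique (hpg : IsPGSinger G 𝓛 s t α) {L M : Finset G} (hL : L ∈ 𝓛) (hM : M ∈ 𝓛)
    {x y : G} (hxy : x ≠ y) (hxL : x ∈ L) (hyL : y ∈ L) (hxM : x ∈ M) (hyM : y ∈ M) :
    L = M := by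
  by_contra hne
  have h1 := hpg.line_inter L hL M hM hne
  have h2 : ({x, y} : Set G) ⊆ (L : Set G) ∩ (M : Set G) := by
    intro z hz
    rcases hz with rfl | hz
    · exact ⟨hxL, hxM⟩
    · rcases hz with rfl
      exact ⟨hyL, hyM⟩
  have h3 : (({x, y} : Set G)).ncard ≤ ((L : Set G) ∩ (M : Set G)).ncard :=
    Set.ncard_le_ncard h2 (Set.toFinite _)
  rw [Set.ncard_pair hxy] at h3
  omega

/-- the finset of lines through a point -/
noncomputable def linesThrough (𝓛 : Set (Finset G)) (x : G) : Finset (Finset G) :=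
  (Set.toFinite {L | L ∈ 𝓛 ∧ x ∈ L}).toFinset

lemma mem_linesThrough {x : G} {L : Finset G} :
    L ∈ linesThrough 𝓛 x ↔ L ∈ 𝓛 ∧ x ∈ L := by
  simp [linesThrough]

lemma card_linesThrough (hpg : IsPGSinger G 𝓛 s t α) (x : G) :
    (linesThrough 𝓛 x).card = t + 1 := by
  have h := hpg.point_deg x
  rwa [Set.ncard_eq_toFinset_card _ (Set.toFinite _)] at h

end Geometry

section Geometry2

variable {G : Type*} [CommGroup G] [Fintype G] [DecidableEq G]
variable {s t α : ℕ} {𝓛 : Set (Finset G)}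

open scoped Classical

/-- Key α-count: for a point `x` off a line `L`, exactly `α` points of `L` are collinear
with `x`. -/
lemma card_adj_in_line (hpg : IsPGSinger G 𝓛 s t α) {L : Finset G} (hL : L ∈ 𝓛) {x : G}
    (hx : x ∉ L) : (L.filter (fun y => adjP 𝓛 x y)).card = α := by
  classical
  set MS : Finset (Finset G) :=
    (Set.toFinite {M | M ∈ 𝓛 ∧ x ∈ M ∧ ∃ y ∈ L, y ∈ M}).toFinset with hMSdef
  have hMS : MS.card = α := by
    have h := hpg.alpha_ax x L hL hx
    rwa [Set.ncard_eq_toFinset_card _ (Set.toFinite _)] at h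
  have hmem : ∀ M ∈ MS, M ∈ 𝓛 ∧ x ∈ M ∧ ∃ y ∈ L, y ∈ M := by
    intro M hM
    rw [hMSdef, Set.Finite.mem_toFinset] at hM
    exact hM
  -- the chosen intersection point
  have hi : ∀ M ∈ MS, ∃ y, y ∈ L ∧ y ∈ M := by
    intro M hM
    obtain ⟨-, -, y, hy1, hy2⟩ := hmem M hM
    exact ⟨y, hy1, hy2⟩
  rw [← hMS]
  refine (Finset.card_bij (fun M hM => (hi M hM).choose) ?_ ?_ ?_).symm
  · -- maps into target
    intro M hM
    obtain ⟨hyL, hyM⟩ := (hi M hM).choose_spec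
    obtain ⟨hML, hxM, -⟩ := hmem M hM
    have hadj : adjP 𝓛 x ((hi M hM).choose) :=
      ⟨fun h => hx (h.symm ▸ hyL), M, hML, hxM, hyM⟩
    exact Finset.mem_filter.mpr ⟨hyL, hadj⟩
  · -- injective
    intro M hM M' hM' heq
    obtain ⟨hyL, hyM⟩ := (hi M hM).choose_spec
    obtain ⟨hyL', hyM'⟩ := (hi M' hM').choose_spec
    obtain ⟨hML, hxM, -⟩ := hmem M hM
    obtain ⟨hML', hxM', -⟩ := hmem M' hM'
    have hxy : x ≠ (hi M hM).choose := fun h => hx (h.symm ▸ hyL)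
    have heq' : (hi M hM).choose = (hi M' hM').choose := heq
    rw [← heq'] at hyM'
    exact line_unique hpg hML hML' hxy hxM hyM hxM' hyM'
  · -- surjective
    intro y hy
    obtain ⟨hyL, hne, M, hML, hxM, hyM⟩ := Finset.mem_filter.mp hy
    have hMmem : M ∈ MS := by
      rw [hMSdef, Set.Finite.mem_toFinset]
      exact ⟨hML, hxM, y, hyL, hyM⟩
    refine ⟨M, hMmem, ?_⟩
    -- chosen point equals y, else M = L
    obtain ⟨hzL, hzM⟩ := (hi M hMmem).choose_spec
    by_contra hzy
    have : M = L := line_unique hpg hML hL hzy hzM hyM hzL hyL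
    exact hx (this ▸ hxM)
end Geometry2

section Geometry3

variable {G : Type*} [CommGroup G] [Fintype G] [DecidableEq G]
variable {s t α : ℕ} {𝓛 : Set (Finset G)}

open scoped Classical

/-- points of a line adjacent to a point of the line: all the others -/
lemma filter_adj_of_mem (hpg : IsPGSinger G 𝓛 s t α) {L : Finset G} (hL : L ∈ 𝓛) {x : G}
    (hx : x ∈ L) : L.filter (fun y => adjP 𝓛 x y) = L.erase x := by
  ext z
  simp only [Finset.mem_filter, Finset.mem_erase]
  constructor
  · rintro ⟨hzL, hne, -⟩
    exact ⟨Ne.symm hne, hzL⟩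
  · rintro ⟨hne, hzL⟩
    exact ⟨hzL, Ne.symm hne, L, hL, hx, hzL⟩

/-- the neighbourhood of a point, partitioned by the lines through it -/
lemma nbr_eq_biUnion (x : G) :
    Finset.univ.filter (fun y => adjP 𝓛 x y)
      = (linesThrough 𝓛 x).biUnion (fun L => L.erase x) := by
  ext z
  simp only [Finset.mem_filter, Finset.mem_univ, true_and, Finset.mem_biUnion,
    Finset.mem_erase, mem_linesThrough]
  constructor
  · rintro ⟨hne, L, hL, hx, hz⟩
    exact ⟨L, ⟨hL, hx⟩, Ne.symm hne, hz⟩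
  · rintro ⟨L, ⟨hL, hx⟩, hne, hz⟩
    exact ⟨Ne.symm hne, L, hL, hx, hz⟩

lemma linesThrough_pairwiseDisjoint (hpg : IsPGSinger G 𝓛 s t α) (x : G) :
    ∀ L ∈ linesThrough 𝓛 x, ∀ M ∈ linesThrough 𝓛 x, L ≠ M →
      Disjoint (L.erase x) (M.erase x) := by
  intro L hL M hM hne
  rw [Finset.disjoint_left]
  intro z hzL hzM
  rw [Finset.mem_erase] at hzL hzM
  rw [mem_linesThrough] at hL hM
  exact hne (line_unique hpg hL.1 hM.1 (Ne.symm hzL.1) hL.2 hzL.2 hM.2 hzM.2)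

/-- every point has exactly `s(t+1)` neighbours -/
lemma card_nbr (hpg : IsPGSinger G 𝓛 s t α) (x : G) :
    (Finset.univ.filter (fun y => adjP 𝓛 x y)).card = (t + 1) * s := by
  rw [nbr_eq_biUnion, Finset.card_biUnion (linesThrough_pairwiseDisjoint hpg x)]
  rw [Finset.sum_congr rfl (fun L hL => ?_), Finset.sum_const, card_linesThrough hpg x,
    smul_eq_mul]
  rw [mem_linesThrough] at hL
  rw [Finset.card_erase_of_mem hL.2, hpg.line_card L hL.1]
  simp

end Geometry3

section Geometry4

variable {G : Type*} [CommGroup G] [Fintype G] [DecidableEq G]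
variable {s t α : ℕ} {𝓛 : Set (Finset G)}

open scoped Classical

/-- common neighbours of `1` and `g` -/
noncomputable def cn (𝓛 : Set (Finset G)) (g : G) : Finset G :=
  Finset.univ.filter (fun h => adjP 𝓛 1 h ∧ adjP 𝓛 h g)

lemma cn_eq_biUnion (g : G) :
    cn 𝓛 g = (linesThrough 𝓛 1).biUnion
      (fun L => (L.erase 1).filter (fun h => adjP 𝓛 h g)) := by
  ext h
  simp only [cn, Finset.mem_filter, Finset.mem_univ, true_and, Finset.mem_biUnion,
    Finset.mem_erase, mem_linesThrough]
  constructor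
  · rintro ⟨⟨hne, L, hL, h1, hh⟩, hadj⟩
    exact ⟨L, ⟨hL, h1⟩, ⟨Ne.symm hne, hh⟩, hadj⟩
  · rintro ⟨L, ⟨hL, h1⟩, ⟨hne, hh⟩, hadj⟩
    exact ⟨⟨Ne.symm hne, L, hL, h1, hh⟩, hadj⟩

lemma cn_disjoint (hpg : IsPGSinger G 𝓛 s t α) (g : G) :
    ∀ L ∈ linesThrough 𝓛 1, ∀ M ∈ linesThrough 𝓛 1, L ≠ M →
      Disjoint ((L.erase 1).filter (fun h => adjP 𝓛 h g))
               ((M.erase 1).filter (fun h => adjP 𝓛 h g)) := by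
  intro L hL M hM hne
  exact Finset.disjoint_filter_filter (linesThrough_pairwiseDisjoint hpg 1 L hL M hM hne)

/-- `λ`-count: if `g` is adjacent to `1`, there are `s - 1 + t(α-1)` common neighbours;
stated without ℕ-subtraction. -/
lemma card_cn_adj (hpg : IsPGSinger G 𝓛 s t α) (hs : 1 ≤ s) (hα : 1 ≤ α) {g : G}
    (hg : adjP 𝓛 1 g) : (cn 𝓛 g).card + 1 + t = s + t * α := by
  classical
  have hg' := hg
  obtain ⟨hne1, N, hN, h1N, hgN⟩ := hg'
  have hNmem : N ∈ linesThrough 𝓛 1 := mem_linesThrough.mpr ⟨hN, h1N⟩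
  rw [cn_eq_biUnion, Finset.card_biUnion (cn_disjoint hpg g)]
  rw [← Finset.add_sum_erase _ _ hNmem]
  -- the line N contributes s - 1
  have hcontribN : ((N.erase 1).filter (fun h => adjP 𝓛 h g)).card = s - 1 := by
    have : (N.erase 1).filter (fun h => adjP 𝓛 h g) = (N.erase 1).erase g := by
      ext z
      simp only [Finset.mem_filter, Finset.mem_erase]
      constructor
      · rintro ⟨⟨hz1, hzN⟩, hzg, -⟩
        exact ⟨hzg, hz1, hzN⟩
      · rintro ⟨hzg, hz1, hzN⟩
        exact ⟨⟨hz1, hzN⟩, hzg, N, hN, hzN, hgN⟩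
    rw [this, Finset.card_erase_of_mem (Finset.mem_erase.mpr ⟨Ne.symm hne1, hgN⟩),
      Finset.card_erase_of_mem h1N, hpg.line_card N hN]
    simp
  -- every other line contributes α - 1
  have hcontrib : ∀ L ∈ (linesThrough 𝓛 1).erase N,
      ((L.erase 1).filter (fun h => adjP 𝓛 h g)).card = α - 1 := by
    intro L hL
    obtain ⟨hLN, hLmem⟩ := Finset.mem_erase.mp hL
    rw [mem_linesThrough] at hLmem
    have hgL : g ∉ L := by
      intro hgL
      exact hLN (line_unique hpg hLmem.1 hN hne1 hLmem.2 hgL h1N hgN)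
    have hfilter : L.filter (fun y => adjP 𝓛 g y) = L.filter (fun h => adjP 𝓛 h g) :=
      Finset.filter_congr (fun y _ => by
        constructor
        · exact fun h => adjP_symm h
        · exact fun h => adjP_symm h)
    have hcard : (L.filter (fun h => adjP 𝓛 h g)).card = α := by
      rw [← hfilter]; exact card_adj_in_line hpg hLmem.1 hgL
    have h1mem : (1 : G) ∈ L.filter (fun h => adjP 𝓛 h g) :=
      Finset.mem_filter.mpr ⟨hLmem.2, hg⟩

    have : (L.erase 1).filter (fun h => adjP 𝓛 h g)
        = (L.filter (fun h => adjP 𝓛 h g)).erase 1 := by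
      rw [Finset.filter_erase]
    rw [this, Finset.card_erase_of_mem h1mem, hcard]
  rw [Finset.sum_congr rfl hcontrib, Finset.sum_const, smul_eq_mul, hcontribN]
  have hcard_erase : ((linesThrough 𝓛 1).erase N).card = t := by
    rw [Finset.card_erase_of_mem hNmem, card_linesThrough hpg 1]
    simp
  rw [hcard_erase]
  have ht : t * (α - 1) + t * 1 = t * α := by
    rw [← Nat.mul_add]; congr 1; omega
  omega

/-- `μ`-count: if `g ≠ 1` is not adjacent to `1`, there are `(t+1)α` common neighbours. -/
lemma card_cn_nonadj (hpg : IsPGSinger G 𝓛 s t α) {g : G} (hg1 : g ≠ 1)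
    (hg : ¬ adjP 𝓛 1 g) : (cn 𝓛 g).card = (t + 1) * α := by
  classical
  rw [cn_eq_biUnion, Finset.card_biUnion (cn_disjoint hpg g)]
  rw [Finset.sum_congr rfl (fun L hL => ?_), Finset.sum_const, card_linesThrough hpg 1,
    smul_eq_mul]
  rw [mem_linesThrough] at hL
  have hgL : g ∉ L := fun hgL => hg ⟨Ne.symm hg1, L, hL.1, hL.2, hgL⟩
  have hfilter : L.filter (fun y => adjP 𝓛 g y) = L.filter (fun h => adjP 𝓛 h g) :=
    Finset.filter_congr (fun y _ => ⟨fun h => adjP_symm h, fun h => adjP_symm h⟩)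
  have hcard : (L.filter (fun h => adjP 𝓛 h g)).card = α := by
    rw [← hfilter]; exact card_adj_in_line hpg hL.1 hgL
  have h1not : (1 : G) ∉ L.filter (fun h => adjP 𝓛 h g) := by
    intro hmem
    exact hg ((Finset.mem_filter.mp hmem).2)
  rw [Finset.filter_erase, Finset.erase_eq_of_notMem h1not, hcard]

end Geometry4

section Geometry5

variable {G : Type*} [CommGroup G] [Fintype G] [DecidableEq G]
variable {s t α : ℕ} {𝓛 : Set (Finset G)}

open scoped Classical

/-- double count: the number of points is determined by the parameters -/
lemma point_count (hpg : IsPGSinger G 𝓛 s t α) {L₀ : Finset G} (hL₀ : L₀ ∈ 𝓛) :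
    (L₀ᶜ.card) * α + (s+1) * s = (s+1) * ((t+1) * s) := by
  classical
  have hdouble :
      ∑ x ∈ L₀ᶜ, (L₀.filter (fun y => adjP 𝓛 x y)).card
        = ∑ y ∈ L₀, (L₀ᶜ.filter (fun x => adjP 𝓛 x y)).card := by
    simp only [Finset.card_filter]
    rw [Finset.sum_comm]
  -- LHS : each x off L₀ sees α points of L₀
  have hLHS : ∑ x ∈ L₀ᶜ, (L₀.filter (fun y => adjP 𝓛 x y)).card = L₀ᶜ.card * α := by
    rw [Finset.sum_congr rfl (fun x hx => card_adj_in_line hpg hL₀ (Finset.mem_compl.mp hx)),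
      Finset.sum_const, smul_eq_mul]
  -- RHS : each y on L₀ has st neighbours off L₀
  have hRHS : ∀ y ∈ L₀, (L₀ᶜ.filter (fun x => adjP 𝓛 x y)).card + s = (t+1) * s := by
    intro y hy
    have h1 : L₀ᶜ.filter (fun x => adjP 𝓛 x y)
        = (Finset.univ.filter (fun x => adjP 𝓛 y x)) \ (L₀.erase y) := by
      ext z
      simp only [Finset.mem_filter, Finset.mem_compl, Finset.mem_sdiff, Finset.mem_univ,
        true_and, Finset.mem_erase]
      constructor
      · rintro ⟨hz, hadj⟩
        exact ⟨adjP_symm hadj, fun h => hz h.2⟩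
      · rintro ⟨hadj, h⟩
        refine ⟨fun hzL => h ⟨fun hzy => ?_, hzL⟩, adjP_symm hadj⟩
        · exact (adjP_irrefl y) (hzy ▸ hadj)
    have h2 : L₀.erase y ⊆ Finset.univ.filter (fun x => adjP 𝓛 y x) := by
      intro z hz
      rw [Finset.mem_erase] at hz
      exact Finset.mem_filter.mpr ⟨Finset.mem_univ z, Ne.symm hz.1, L₀, hL₀, hy, hz.2⟩
    rw [h1, Finset.card_sdiff_of_subset h2, Finset.card_erase_of_mem hy, hpg.line_card L₀ hL₀,
      card_nbr hpg y]
    have hle : s + 1 - 1 ≤ (t+1) * s := by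
      have : s ≤ (t+1) * s := Nat.le_mul_of_pos_left s (Nat.succ_pos t)
      omega
    omega
  have : ∑ y ∈ L₀, ((L₀ᶜ.filter (fun x => adjP 𝓛 x y)).card + s)
      = (s+1) * ((t+1) * s) := by
    rw [Finset.sum_congr rfl hRHS, Finset.sum_const, hpg.line_card L₀ hL₀, smul_eq_mul]
  rw [Finset.sum_add_distrib, Finset.sum_const, hpg.line_card L₀ hL₀, smul_eq_mul] at this
  rw [← this, ← hdouble, hLHS]

/-- there is a point distinct from `1` and not collinear with `1` -/
lemma exists_far_point (hpg : IsPGSinger G 𝓛 s t α) (hs : 1 ≤ s) (ht : 1 ≤ t)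
    (hαs : α ≤ s) (hα : 1 ≤ α) :
    ∃ g : G, g ≠ 1 ∧ ¬ adjP 𝓛 1 g := by
  classical
  by_contra hcon
  push_neg at hcon
  -- get a line through 1
  have hlt : (linesThrough 𝓛 1).Nonempty := by
    rw [← Finset.card_pos, card_linesThrough hpg 1]; omega
  obtain ⟨L₀, hL₀mem⟩ := hlt
  rw [mem_linesThrough] at hL₀mem
  have hcount := point_count hpg hL₀mem.1
  -- univ ⊆ insert 1 D
  have hsub : (Finset.univ : Finset G) ⊆ insert 1 (Finset.univ.filter (fun y => adjP 𝓛 1 y)) := by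
    intro g _
    rcases eq_or_ne g 1 with rfl | hg
    · exact Finset.mem_insert_self _ _
    · exact Finset.mem_insert_of_mem (Finset.mem_filter.mpr ⟨Finset.mem_univ g, hcon g hg⟩)
  have hv : Fintype.card G ≤ 1 + (t+1) * s := by
    calc Fintype.card G = Finset.univ.card := (Finset.card_univ).symm
    _ ≤ (insert 1 (Finset.univ.filter (fun y => adjP 𝓛 1 y))).card := Finset.card_le_card hsub
    _ ≤ 1 + (t+1) * s := by
        rw [← card_nbr hpg 1]
        exact (Finset.card_insert_le _ _).trans (by omega)
  have hcompl : L₀ᶜ.card = Fintype.card G - (s+1) := by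
    rw [Finset.card_compl, hpg.line_card L₀ hL₀mem.1]
  have hvg : s + 1 ≤ Fintype.card G := by
    rw [← hpg.line_card L₀ hL₀mem.1]
    exact Finset.card_le_univ L₀ |>.trans (le_of_eq Finset.card_univ)
  -- L₀ᶜ.card ≤ st
  have h1 : L₀ᶜ.card ≤ s * t := by
    rw [hcompl]
    have : (t+1) * s = s * t + s := by ring
    omega
  have h2 : L₀ᶜ.card * α ≤ s * t * s := Nat.mul_le_mul h1 hαs
  have h3 : (s+1) * ((t+1) * s) = s*t*s + s*t + (s+1)*s := by ring
  have h4 : 0 < s * t := by positivity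
  omega

end Geometry5

section EFun

variable {G : Type*} [CommGroup G] [Fintype G] [DecidableEq G]
variable {s t α : ℕ} {𝓛 : Set (Finset G)}

open scoped Classical

noncomputable def deltaF (t : ℕ) : G → ℂ := fun g => if g = 1 then ((t : ℂ)+1) else 0

noncomputable def dF (𝓛 : Set (Finset G)) : G → ℂ := fun g => if adjP 𝓛 1 g then 1 else 0

noncomputable def Efun (𝓛 : Set (Finset G)) (t : ℕ) : G → ℂ :=
  fun g => deltaF t g + dF 𝓛 g

lemma adjP_one_inv (hpg : IsPGSinger G 𝓛 s t α) {h : G} (hh : adjP 𝓛 1 h) :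
    adjP 𝓛 1 h⁻¹ := by
  have := adjP_translate h⁻¹ hpg hh
  simpa using adjP_symm this

lemma adjP_shift (hpg : IsPGSinger G 𝓛 s t α) (g k : G) :
    adjP 𝓛 1 (g⁻¹ * k) ↔ adjP 𝓛 g k := by
  constructor
  · intro h
    have := adjP_translate g hpg h
    simpa using this
  · intro h
    have := adjP_translate g⁻¹ hpg h
    simpa using this

lemma sum_dd (hpg : IsPGSinger G 𝓛 s t α) (k : G) :
    ∑ g : G, dF 𝓛 g * dF 𝓛 (g⁻¹ * k)
      = (((Finset.univ.filter (fun g => adjP 𝓛 1 g ∧ adjP 𝓛 1 (g⁻¹ * k))).card : ℕ) : ℂ) := by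
  rw [Finset.card_filter]
  push_cast
  refine Finset.sum_congr rfl (fun g _ => ?_)
  by_cases h1 : adjP 𝓛 1 g <;> by_cases h2 : adjP 𝓛 1 (g⁻¹ * k) <;>
    simp [dF, h1, h2]

/-- The convolution identity: `E * E = β E + μ`. -/
lemma conv_identity (hpg : IsPGSinger G 𝓛 s t α) (hs : 1 ≤ s) (hα : 1 ≤ α) (k : G) :
    ∑ g : G, Efun 𝓛 t g * Efun 𝓛 t (g⁻¹ * k)
      = ((s : ℂ) + t + 1 - α) * Efun 𝓛 t k + (α : ℂ) * ((t : ℂ) + 1) := by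
  classical
  have expand : ∑ g : G, Efun 𝓛 t g * Efun 𝓛 t (g⁻¹ * k)
      = (∑ g : G, deltaF t g * deltaF t (g⁻¹*k))
        + (∑ g : G, deltaF t g * dF 𝓛 (g⁻¹*k))
        + (∑ g : G, dF 𝓛 g * deltaF t (g⁻¹*k))
        + (∑ g : G, dF 𝓛 g * dF 𝓛 (g⁻¹*k)) := by
    simp only [Efun]
    rw [← Finset.sum_add_distrib, ← Finset.sum_add_distrib, ← Finset.sum_add_distrib]
    exact Finset.sum_congr rfl (fun g _ => by ring)
  have T1 : ∑ g : G, deltaF t g * deltaF t (g⁻¹*k) = ((t:ℂ)+1) * deltaF t k := by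
    rw [Finset.sum_eq_single 1]
    · simp [deltaF]
    · intro g _ hg; simp [deltaF, hg]
    · intro h; exact absurd (Finset.mem_univ 1) h
  have T2 : ∑ g : G, deltaF t g * dF 𝓛 (g⁻¹*k) = ((t:ℂ)+1) * dF 𝓛 k := by
    rw [Finset.sum_eq_single 1]
    · simp [deltaF]
    · intro g _ hg; simp [deltaF, hg]
    · intro h; exact absurd (Finset.mem_univ 1) h
  have T3 : ∑ g : G, dF 𝓛 g * deltaF t (g⁻¹*k) = ((t:ℂ)+1) * dF 𝓛 k := by
    rw [Finset.sum_eq_single k]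
    · simp [deltaF, mul_comm]
    · intro g _ hg
      have : g⁻¹ * k ≠ 1 := fun h => hg (by
        have := inv_mul_eq_one.mp h; exact this.symm ▸ rfl)
      simp [deltaF, this]
    · intro h; exact absurd (Finset.mem_univ k) h
  rw [expand, T1, T2, T3, sum_dd hpg k]
  -- now case on k
  rcases eq_or_ne k 1 with rfl | hk1
  · -- k = 1
    have hfilter : (Finset.univ.filter (fun g => adjP 𝓛 1 g ∧ adjP 𝓛 1 (g⁻¹ * 1))) =
        Finset.univ.filter (fun g => adjP 𝓛 1 g) := by
      refine Finset.filter_congr (fun g _ => ?_)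
      simp only [mul_one]
      constructor
      · exact fun h => h.1
      · exact fun h => ⟨h, adjP_one_inv hpg h⟩
    rw [hfilter, card_nbr hpg 1]
    have hd : dF 𝓛 (1:G) = 0 := by simp [dF, adjP_irrefl]
    have hδ : deltaF t (1:G) = (t:ℂ)+1 := by simp [deltaF]
    simp only [Efun, hd, hδ]
    push_cast
    ring
  · rcases Classical.em (adjP 𝓛 1 k) with hk | hk
    · -- k adjacent to 1
      have hfilter : (Finset.univ.filter (fun g => adjP 𝓛 1 g ∧ adjP 𝓛 1 (g⁻¹ * k))) = cn 𝓛 k := by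
        refine Finset.filter_congr (fun g _ => ?_)
        rw [adjP_shift hpg]
      rw [hfilter]
      have hcard := card_cn_adj hpg hs hα hk
      have hcast : ((cn 𝓛 k).card : ℂ) = (s:ℂ) + (t:ℂ)*(α:ℂ) - 1 - (t:ℂ) := by
        have : (((cn 𝓛 k).card : ℕ) : ℂ) + 1 + (t:ℂ) = (s:ℂ) + (t:ℂ)*(α:ℂ) := by
          exact_mod_cast congrArg (Nat.cast : ℕ → ℂ) hcard
        linear_combination this
      rw [hcast]
      have hd : dF 𝓛 k = 1 := by simp [dF, hk]
      have hδ : deltaF t k = 0 := by simp [deltaF, hk1]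
      simp only [Efun, hd, hδ]
      ring
    · -- k not adjacent, k ≠ 1
      have hfilter : (Finset.univ.filter (fun g => adjP 𝓛 1 g ∧ adjP 𝓛 1 (g⁻¹ * k))) = cn 𝓛 k := by
        refine Finset.filter_congr (fun g _ => ?_)
        rw [adjP_shift hpg]
      rw [hfilter, card_cn_nonadj hpg hk1 hk]
      have hd : dF 𝓛 k = 0 := by simp [dF, hk]
      have hδ : deltaF t k = 0 := by simp [deltaF, hk1]
      simp only [Efun, hd, hδ]
      push_cast
      ring

end EFun

section Characters

variable {G : Type*} [CommGroup G] [Fintype G] [DecidableEq G]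

open scoped Classical

/-- sum of a nontrivial character over the group vanishes -/
lemma char_sum_zero (χ : G →* ℂˣ) {x : G} (hx : ((χ x : ℂˣ) : ℂ) ≠ 1) :
    ∑ g : G, ((χ g : ℂˣ) : ℂ) = 0 := by
  have key : ∑ g : G, ((χ g : ℂˣ) : ℂ) = ((χ x : ℂˣ) : ℂ) * ∑ g : G, ((χ g : ℂˣ) : ℂ) := by
    rw [Finset.mul_sum]
    refine Fintype.sum_equiv (Equiv.mulLeft x⁻¹) _ _ (fun g => ?_)
    rw [Equiv.coe_mulLeft, ← Units.val_mul, ← map_mul, mul_inv_cancel_left]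
  have : (((χ x : ℂˣ) : ℂ) - 1) * ∑ g : G, ((χ g : ℂˣ) : ℂ) = 0 := by
    rw [sub_mul, one_mul, ← key, sub_self]
  rcases mul_eq_zero.mp this with h | h
  · exact absurd (by linear_combination h) hx
  · exact h

/-- sum over all characters of the value at a nonidentity element vanishes -/
lemma dual_sum_zero [Fintype (G →* ℂˣ)]
    (hsep : ∀ x : G, x ≠ 1 → ∃ ψ : G →* ℂˣ, ψ x ≠ 1) {x : G} (hx : x ≠ 1) :
    ∑ χ : G →* ℂˣ, ((χ x : ℂˣ) : ℂ) = 0 := by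
  obtain ⟨ψ, hψ⟩ := hsep x hx
  have hψ' : ((ψ x : ℂˣ) : ℂ) ≠ 1 := by
    intro h
    exact hψ (Units.ext h)
  have key : ∑ χ : G →* ℂˣ, ((χ x : ℂˣ) : ℂ)
      = ((ψ x : ℂˣ) : ℂ) * ∑ χ : G →* ℂˣ, ((χ x : ℂˣ) : ℂ) := by
    rw [Finset.mul_sum]
    refine Fintype.sum_equiv (Equiv.mulLeft ψ⁻¹) _ _ (fun χ => ?_)
    rw [Equiv.coe_mulLeft, ← Units.val_mul, MonoidHom.mul_apply, MonoidHom.inv_apply,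
      mul_inv_cancel_left]
  have : (((ψ x : ℂˣ) : ℂ) - 1) * ∑ χ : G →* ℂˣ, ((χ x : ℂˣ) : ℂ) = 0 := by
    rw [sub_mul, one_mul, ← key, sub_self]
  rcases mul_eq_zero.mp this with h | h
  · exact absurd (by linear_combination h) hψ'
  · exact h

/-- character values on a finite group are algebraic integers -/
lemma char_val_isIntegral (χ : G →* ℂˣ) (x : G) :
    IsIntegral ℤ ((χ x : ℂˣ) : ℂ) := by
  refine ⟨Polynomial.X ^ (Fintype.card G) - Polynomial.C 1, ?_, ?_⟩
  · exact Polynomial.monic_X_pow_sub_C 1 (Fintype.card_ne_zero)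
  · have hx : ((χ x : ℂˣ) : ℂ) ^ (Fintype.card G) = 1 := by
      have : χ (x ^ (Fintype.card G)) = 1 := by rw [pow_card_eq_one, map_one]
      calc ((χ x : ℂˣ) : ℂ) ^ (Fintype.card G) = ((χ (x ^ Fintype.card G) : ℂˣ) : ℂ) := by
            rw [map_pow]; push_cast; ring
      _ = 1 := by rw [this]; rfl
    simp [Polynomial.eval₂_sub, Polynomial.eval₂_pow, hx]

end Characters

/-- for a proper `pg(s,t,α)` of rigid type with abelian Singer group `G`,
`s+t-α+1` divides `(s+1)(t+1)`. -/
theorem rigid_type_dvd_lines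
    (G : Type*) [CommGroup G] [Fintype G] [DecidableEq G]
    (s t α : ℕ) (hα2 : 2 ≤ α) (hαs : α < s) (hαt : α < t)
    (𝓛 : Set (Finset G)) (hpg : IsPGSinger G 𝓛 s t α) (hrig : RigidType G 𝓛) :
    (s + t - α + 1) ∣ (s + 1) * (t + 1) := by
  classical
  have hs1 : 1 ≤ s := by omega
  have ht1 : 1 ≤ t := by omega
  have hα1 : 1 ≤ α := by omega
  -- set up the dual group machinery
  haveI : NeZero ((Monoid.exponent G : ℂ)) :=
    ⟨Nat.cast_ne_zero.mpr Monoid.exponent_ne_zero_of_finite⟩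
  have hsep : ∀ x : G, x ≠ 1 → ∃ ψ : G →* ℂˣ, ψ x ≠ 1 := fun x hx =>
    CommGroup.exists_apply_ne_one_of_hasEnoughRootsOfUnity G ℂ hx
  haveI : Finite (G →* ℂˣ) := by
    obtain ⟨e⟩ := CommGroup.monoidHom_mulEquiv_of_hasEnoughRootsOfUnity G ℂ
    exact Finite.of_equiv G e.toEquiv.symm
  letI : Fintype (G →* ℂˣ) := Fintype.ofFinite _
  -- a far point
  obtain ⟨g₀, hg₀1, hg₀⟩ := exists_far_point hpg hs1 ht1 (le_of_lt hαs) hα1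
  set E : G → ℂ := Efun 𝓛 t with hE
  set β' : ℂ := (s : ℂ) + t + 1 - α with hβ'
  set cE : (G →* ℂˣ) → ℂ := fun χ => ∑ g : G, E g * ((χ g : ℂˣ) : ℂ) with hcE
  -- value at the trivial character
  have hcE1 : cE 1 = ((s : ℂ) + 1) * ((t : ℂ) + 1) := by
    rw [hcE]
    simp only [MonoidHom.one_apply, Units.val_one, mul_one]
    rw [hE]
    have : ∑ g : G, Efun 𝓛 t g
        = (∑ g : G, deltaF t g) + (∑ g : G, dF 𝓛 g) := by
      simp only [Efun]; rw [Finset.sum_add_distrib]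
    rw [this]
    have h1 : ∑ g : G, deltaF t g = (t : ℂ) + 1 := by
      rw [Finset.sum_eq_single 1]
      · simp [deltaF]
      · intro g _ hg; simp [deltaF, hg]
      · intro h; exact absurd (Finset.mem_univ 1) h
    have h2 : ∑ g : G, dF 𝓛 g = (((t+1) * s : ℕ) : ℂ) := by
      rw [← card_nbr hpg 1, Finset.card_filter]
      push_cast
      refine Finset.sum_congr rfl (fun g _ => ?_)
      by_cases h : adjP 𝓛 1 g <;> simp [dF, h]
    rw [h1, h2]
    push_cast
    ring
  -- the quadratic relation at nontrivial characters
  have hquad : ∀ χ : G →* ℂˣ, χ ≠ 1 → cE χ = 0 ∨ cE χ = β' := by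
    intro χ hχ
    obtain ⟨x, hx⟩ : ∃ x : G, χ x ≠ 1 := by
      by_contra h
      push_neg at h
      exact hχ (MonoidHom.ext fun x => (h x).trans rfl)
    have hxval : ((χ x : ℂˣ) : ℂ) ≠ 1 := fun h => hx (Units.ext h)
    have hmul : cE χ * cE χ = β' * cE χ := by
      rw [hcE]
      rw [Finset.sum_mul_sum]
      have hinner : ∀ g : G, (E g * ((χ g : ℂˣ) : ℂ)) * (∑ h : G, E h * ((χ h : ℂˣ) : ℂ))
          = ∑ k : G, E g * E (g⁻¹ * k) * ((χ k : ℂˣ) : ℂ) := by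
        intro g
        have hre : ∑ h : G, E h * ((χ h : ℂˣ) : ℂ)
            = ∑ k : G, E (g⁻¹ * k) * ((χ (g⁻¹ * k) : ℂˣ) : ℂ) :=
          (Equiv.sum_comp (Equiv.mulLeft g⁻¹) (fun h => E h * ((χ h : ℂˣ) : ℂ))).symm
        rw [hre, Finset.mul_sum]
        refine Finset.sum_congr rfl (fun k _ => ?_)
        have : ((χ g : ℂˣ) : ℂ) * ((χ (g⁻¹ * k) : ℂˣ) : ℂ) = ((χ k : ℂˣ) : ℂ) := by
          rw [← Units.val_mul, ← map_mul, mul_inv_cancel_left]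
        calc E g * ((χ g : ℂˣ) : ℂ) * (E (g⁻¹ * k) * ((χ (g⁻¹ * k) : ℂˣ) : ℂ))
            = E g * E (g⁻¹ * k) * (((χ g : ℂˣ) : ℂ) * ((χ (g⁻¹ * k) : ℂˣ) : ℂ)) := by ring
        _ = E g * E (g⁻¹ * k) * ((χ k : ℂˣ) : ℂ) := by rw [this]
      calc ∑ g : G, ∑ h : G, (E g * ((χ g : ℂˣ) : ℂ)) * (E h * ((χ h : ℂˣ) : ℂ))
          = ∑ g : G, ∑ k : G, E g * E (g⁻¹ * k) * ((χ k : ℂˣ) : ℂ) := by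
            refine Finset.sum_congr rfl (fun g _ => ?_)
            rw [← hinner g, ← Finset.mul_sum]
      _ = ∑ k : G, ∑ g : G, E g * E (g⁻¹ * k) * ((χ k : ℂˣ) : ℂ) := Finset.sum_comm
      _ = ∑ k : G, (∑ g : G, E g * E (g⁻¹ * k)) * ((χ k : ℂˣ) : ℂ) := by
            refine Finset.sum_congr rfl (fun k _ => ?_)
            rw [Finset.sum_mul]
      _ = ∑ k : G, (β' * E k + (α : ℂ) * ((t : ℂ) + 1)) * ((χ k : ℂˣ) : ℂ) := by
            refine Finset.sum_congr rfl (fun k _ => ?_)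
            rw [hE, conv_identity hpg hs1 hα1 k, hβ']
      _ = β' * (∑ k : G, E k * ((χ k : ℂˣ) : ℂ))
            + (α : ℂ) * ((t : ℂ) + 1) * ∑ k : G, ((χ k : ℂˣ) : ℂ) := by
            rw [Finset.mul_sum, Finset.mul_sum, ← Finset.sum_add_distrib]
            exact Finset.sum_congr rfl (fun k _ => by ring)
      _ = β' * ∑ k : G, E k * ((χ k : ℂˣ) : ℂ) := by
            rw [char_sum_zero χ hxval]; ring
    have : cE χ * (cE χ - β') = 0 := by linear_combination hmul
    rcases mul_eq_zero.mp this with h | h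
    · exact Or.inl h
    · exact Or.inr (by linear_combination h)
  -- the total sum over all characters vanishes
  have htotal : ∑ χ : G →* ℂˣ, cE χ * ((χ g₀⁻¹ : ℂˣ) : ℂ) = 0 := by
    have h1 : ∀ χ : G →* ℂˣ, cE χ * ((χ g₀⁻¹ : ℂˣ) : ℂ)
        = ∑ g : G, E g * ((χ (g * g₀⁻¹) : ℂˣ) : ℂ) := by
      intro χ
      simp only [hcE]
      rw [Finset.sum_mul]
      refine Finset.sum_congr rfl (fun g _ => ?_)
      rw [map_mul, Units.val_mul]; ring
    have hswap : ∑ χ : G →* ℂˣ, cE χ * ((χ g₀⁻¹ : ℂˣ) : ℂ)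
        = ∑ g : G, E g * ∑ χ : G →* ℂˣ, ((χ (g * g₀⁻¹) : ℂˣ) : ℂ) := by
      calc ∑ χ : G →* ℂˣ, cE χ * ((χ g₀⁻¹ : ℂˣ) : ℂ)
          = ∑ χ : G →* ℂˣ, ∑ g : G, E g * ((χ (g * g₀⁻¹) : ℂˣ) : ℂ) :=
            Finset.sum_congr rfl (fun χ _ => h1 χ)
      _ = ∑ g : G, ∑ χ : G →* ℂˣ, E g * ((χ (g * g₀⁻¹) : ℂˣ) : ℂ) := Finset.sum_comm
      _ = ∑ g : G, E g * ∑ χ : G →* ℂˣ, ((χ (g * g₀⁻¹) : ℂˣ) : ℂ) := by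
            refine Finset.sum_congr rfl (fun g _ => ?_)
            rw [Finset.mul_sum]
    rw [hswap]
    rw [Finset.sum_eq_single g₀]
    · have hEg₀ : E g₀ = 0 := by
        rw [hE]
        simp [Efun, deltaF, dF, hg₀1, hg₀]
      rw [hEg₀, zero_mul]
    · intro g _ hg
      have hne : g * g₀⁻¹ ≠ 1 := fun h => hg (mul_inv_eq_one.mp h)
      rw [dual_sum_zero hsep hne, mul_zero]
    · intro h; exact absurd (Finset.mem_univ g₀) h
  -- split off the trivial character
  have hsplit : ((s : ℂ) + 1) * ((t : ℂ) + 1)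
      + ∑ χ ∈ Finset.univ.erase (1 : G →* ℂˣ), cE χ * ((χ g₀⁻¹ : ℂˣ) : ℂ) = 0 := by
    rw [← htotal, ← Finset.add_sum_erase _ _ (Finset.mem_univ (1 : G →* ℂˣ))]
    congr 1
    rw [hcE1]
    simp
  -- rewrite the nontrivial part via the dichotomy
  set S : ℂ := ∑ χ ∈ Finset.univ.erase (1 : G →* ℂˣ),
      (if cE χ = β' then ((χ g₀⁻¹ : ℂˣ) : ℂ) else 0) with hS
  have hβS : β' * S = -(((s : ℂ) + 1) * ((t : ℂ) + 1)) := by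
    have : ∑ χ ∈ Finset.univ.erase (1 : G →* ℂˣ), cE χ * ((χ g₀⁻¹ : ℂˣ) : ℂ) = β' * S := by
      rw [hS, Finset.mul_sum]
      refine Finset.sum_congr rfl (fun χ hχ => ?_)
      have hχ1 : χ ≠ 1 := (Finset.mem_erase.mp hχ).1
      by_cases hc : cE χ = β'
      · rw [if_pos hc, hc]
      · rcases hquad χ hχ1 with h0 | hb
        · rw [if_neg hc, h0, zero_mul, mul_zero]
        · exact absurd hb hc
    linear_combination hsplit - this
  -- S is an algebraic integer
  have hSint : IsIntegral ℤ S := by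
    rw [hS]
    refine IsIntegral.sum _ (fun χ _ => ?_)
    by_cases hc : cE χ = β'
    · rw [if_pos hc]; exact char_val_isIntegral χ g₀⁻¹
    · rw [if_neg hc]; exact isIntegral_zero
  -- arithmetic extraction
  set B : ℕ := s + t + 1 - α with hB
  have hBpos : 0 < B := by omega
  have hBc : ((B : ℕ) : ℂ) = β' := by
    rw [hβ', hB]
    have : ((s + t + 1 - α : ℕ) : ℂ) = ((s + t + 1 : ℕ) : ℂ) - (α : ℂ) := by
      rw [Nat.cast_sub (by omega)]
    rw [this]; push_cast; ring
  have hBere : ((B : ℕ) : ℚ) ≠ 0 := Nat.cast_ne_zero.mpr (by omega)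
  set q : ℚ := -((((s+1) * (t+1) : ℕ) : ℚ) / ((B : ℕ) : ℚ)) with hq
  have hSq : S = algebraMap ℚ ℂ q := by
    have hβne : β' ≠ 0 := by
      rw [← hBc]
      exact_mod_cast Nat.cast_ne_zero.mpr (by omega : B ≠ 0)
    have hSval : S = -(((s : ℂ) + 1) * ((t : ℂ) + 1)) / β' := by
      field_simp at hβS ⊢
      linear_combination hβS
    rw [hSval, ← hBc]
    rw [hq]
    push_cast
    field_simp
  have hqint : IsIntegral ℤ q := by
    rw [hSq] at hSint
    exact (isIntegral_algebraMap_iff ((algebraMap ℚ ℂ).injective)).mp hSint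
  obtain ⟨z, hz⟩ := IsIntegrallyClosed.isIntegral_iff.mp hqint
  -- from z = q derive the divisibility
  have hzq : ((z : ℤ) : ℚ) = q := by exact_mod_cast hz
  have hmulq : ((z : ℤ) : ℚ) * ((B : ℕ) : ℚ) = -((((s+1) * (t+1) : ℕ) : ℚ)) := by
    rw [hzq, hq]
    field_simp
  have hmulz : (z : ℤ) * (B : ℤ) = -(((s+1) * (t+1) : ℕ) : ℤ) := by
    exact_mod_cast hmulq
  have hdvd : (B : ℤ) ∣ (((s+1) * (t+1) : ℕ) : ℤ) := ⟨-z, by linarith [hmulz]⟩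
  have hdvdn : B ∣ (s+1) * (t+1) := by exact_mod_cast hdvd
  have : s + t - α + 1 = B := by omega
  rwa [this]
end

section
/- Let s, t, α be positive integers with 2 ≤ α, α < s and α < t, and let G be a finite abelian group with line set 𝓛 making (G,𝓛) a proper partial geometry pg(s,t,α) admitting G as an abelian Singer group, such that the pair is of rigid type (axioms (i)–(vi) of the encoding). Then there exists a positive integer x such that t + 1 = x(s + 1). -/
/-- for a proper `pg(s,t,α)` of rigid type with abelian Singer group `G`,
`t+1` is a positive multiple of `s+1`. -/
theorem rigid_type_t_multiple
    (G : Type*) [CommGroup G] [Fintype G] [DecidableEq G]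
    (s t α : ℕ) (hα2 : 2 ≤ α) (hαs : α < s) (hαt : α < t)
    (𝓛 : Set (Finset G)) (hpg : IsPGSinger G 𝓛 s t α) (hrig : RigidType G 𝓛) :
    ∃ x : ℕ, 0 < x ∧ t + 1 = x * (s + 1) := by
  classical
  obtain ⟨hcard, hdeg, -, -, htr⟩ := hpg
  set 𝓕 : Finset (Finset G) := (Set.toFinite 𝓛).toFinset with h𝓕
  have hmem : ∀ L, L ∈ 𝓕 ↔ L ∈ 𝓛 := fun L => Set.Finite.mem_toFinset _
  set T : G → Finset G → Finset G := fun g L => L.image (fun y => g * y) with hT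
  have hTcomp : ∀ (g h : G) (L : Finset G), T g (T h L) = T (g * h) L := by
    intro g h L
    simp only [hT, Finset.image_image]
    apply Finset.image_congr
    intro y _
    simp [mul_assoc]
  have hTone : ∀ L : Finset G, T 1 L = L := by
    intro L; rw [hT]; simp only [one_mul]; exact Finset.image_id
  have htr' : ∀ g : G, ∀ L ∈ 𝓕, T g L ∈ 𝓕 := by
    intro g L hL
    rw [hmem] at *
    exact htr g L hL
  -- orbits
  set orb : Finset G → Finset (Finset G) := fun L => Finset.univ.image (fun g : G => T g L)
    with horb
  have hself : ∀ L : Finset G, L ∈ orb L := by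
    intro L
    rw [horb]
    exact Finset.mem_image.mpr ⟨1, Finset.mem_univ _, hTone L⟩
  have horbcard : ∀ L ∈ 𝓕, (orb L).card = Fintype.card G := by
    intro L hL
    rw [horb]
    rw [Finset.card_image_of_injective _ ?_, Finset.card_univ]
    intro g h hgh
    have hgh' : T g L = T h L := hgh
    have h1 : T (h⁻¹ * g) L = L := by
      rw [← hTcomp, hgh', hTcomp, inv_mul_cancel, hTone]
    have := hrig (h⁻¹ * g) L ((hmem L).1 hL) h1
    exact (inv_mul_eq_one.mp this).symm
  have horbeq : ∀ (L : Finset G) (h : G), orb (T h L) = orb L := by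
    intro L h
    ext M
    simp only [horb, Finset.mem_image, Finset.mem_univ, true_and]
    constructor
    · rintro ⟨g, rfl⟩; exact ⟨g * h, (hTcomp g h L).symm⟩
    · rintro ⟨g, rfl⟩
      refine ⟨g * h⁻¹, ?_⟩
      rw [hTcomp, mul_assoc, inv_mul_cancel, mul_one]
  have hfiber : ∀ L ∈ 𝓕, 𝓕.filter (fun M => orb M = orb L) = orb L := by
    intro L hL
    ext M
    simp only [Finset.mem_filter]
    constructor
    · rintro ⟨hM, he⟩
      rw [← he]; exact hself M
    · intro hM
      obtain ⟨g, -, rfl⟩ := Finset.mem_image.mp hM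
      exact ⟨htr' g L hL, horbeq L g⟩
  -- card 𝓕 = k * |G|
  obtain ⟨k, hk⟩ : ∃ k, 𝓕.card = k * Fintype.card G := by
    refine ⟨(𝓕.image orb).card, ?_⟩
    rw [Finset.card_eq_sum_card_fiberwise
      (fun L hL => Finset.mem_image_of_mem orb hL)]
    rw [Finset.sum_congr rfl (g := fun _ => Fintype.card G) ?_, Finset.sum_const,
      smul_eq_mul]
    intro O hO
    obtain ⟨L, hL, rfl⟩ := Finset.mem_image.mp hO
    rw [hfiber L hL, horbcard L hL]
  -- double counting
  have hcount : 𝓕.card * (s + 1) = Fintype.card G * (t + 1) := by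
    have key : ∑ L ∈ 𝓕, ∑ x : G, (if x ∈ L then 1 else 0)
        = ∑ x : G, ∑ L ∈ 𝓕, (if x ∈ L then 1 else 0) := Finset.sum_comm
    have e1 : ∀ L ∈ 𝓕, ∑ x : G, (if x ∈ L then 1 else 0) = s + 1 := by
      intro L hL
      rw [← Finset.card_filter]
      have : Finset.univ.filter (fun x => x ∈ L) = L := by
        ext x; simp
      rw [this, hcard L ((hmem L).1 hL)]
    have e2 : ∀ x ∈ (Finset.univ : Finset G), ∑ L ∈ 𝓕, (if x ∈ L then 1 else 0) = t + 1 := by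
      intro x _
      rw [← Finset.card_filter]
      have hset : {L | L ∈ 𝓛 ∧ x ∈ L} = ↑(𝓕.filter (fun L => x ∈ L)) := by
        ext L; simp [hmem]
      have := hdeg x
      rw [hset, Set.ncard_coe_finset] at this
      exact this
    have hL' : ∑ L ∈ 𝓕, ∑ x : G, (if x ∈ L then 1 else 0) = 𝓕.card * (s + 1) := by
      rw [Finset.sum_congr rfl e1, Finset.sum_const, smul_eq_mul]
    have hR' : ∑ x : G, ∑ L ∈ 𝓕, (if x ∈ L then 1 else 0)
        = Fintype.card G * (t + 1) := by
      rw [Finset.sum_congr rfl e2, Finset.sum_const, smul_eq_mul, Finset.card_univ]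
    rw [← hL', ← hR']
    exact key
  refine ⟨k, ?_, ?_⟩
  · rcases Nat.eq_zero_or_pos k with rfl | h
    · rw [hk] at hcount
      simp at hcount
    · exact h
  · have h2 : Fintype.card G * (k * (s + 1)) = Fintype.card G * (t + 1) := by
      rw [← hcount, hk]; ring
    exact (Nat.eq_of_mul_eq_mul_left Fintype.card_pos h2).symm
end

section
/- Let s, t, α be positive integers with 2 ≤ α, α < s and α < t, and let G be a finite abelian group with line set 𝓛 making (G,𝓛) a proper partial geometry pg(s,t,α) admitting G as an abelian Singer group, such that the pair is of rigid type (axioms (i)–(vi) of the encoding). Then there exist positive integers x and c such that t + 1 = x(s + 1), (α+1)² − c(s+1) > 0, and x·((α+1)² − c(s+1)) = c·(s − α) (equivalently, x(α+1)² = c((x+1)(s+1) − (α+1))). -/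
open Finset
set_option linter.unusedSectionVars false
set_option maxHeartbeats 1000000


section chars
variable {H : Type*} [CommGroup H] [Fintype H]

lemma char_sum_zero_s5 [Fintype (H →* ℂˣ)] {g : H} (hg : g ≠ 1) :
    ∑ χ : H →* ℂˣ, ((χ g : ℂˣ) : ℂ) = 0 := by
  haveI : NeZero (Monoid.exponent H) := ⟨Monoid.exponent_ne_zero_of_finite⟩
  obtain ⟨ψ, hψ⟩ := CommGroup.exists_apply_ne_one_of_hasEnoughRootsOfUnity H ℂ hg
  have key : ∑ χ : H →* ℂˣ, (((ψ * χ) g : ℂˣ) : ℂ) = ∑ χ : H →* ℂˣ, ((χ g : ℂˣ) : ℂ) :=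
    Fintype.sum_bijective (fun χ => ψ * χ) (Group.mulLeft_bijective ψ) _ _ (fun χ => rfl)
  simp only [MonoidHom.mul_apply, Units.val_mul] at key
  rw [← Finset.mul_sum] at key
  have h0 : (((ψ g : ℂˣ) : ℂ) - 1) * (∑ χ : H →* ℂˣ, ((χ g : ℂˣ) : ℂ)) = 0 := by
    rw [sub_mul, one_mul, key, sub_self]
  rcases mul_eq_zero.mp h0 with h | h
  · exact absurd (Units.ext (by simpa [sub_eq_zero] using h)) hψ
  · exact h

lemma group_sum_zero {χ : H →* ℂˣ} (hχ : χ ≠ 1) : ∑ g : H, ((χ g : ℂˣ) : ℂ) = 0 := by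
  obtain ⟨a, ha⟩ : ∃ a, χ a ≠ 1 := by
    by_contra h
    push_neg at h
    exact hχ (MonoidHom.ext fun a => h a)
  have key : ∑ g : H, ((χ (a * g) : ℂˣ) : ℂ) = ∑ g : H, ((χ g : ℂˣ) : ℂ) :=
    Fintype.sum_bijective (fun g => a * g) (Group.mulLeft_bijective a) _ _ (fun g => rfl)
  simp only [map_mul, Units.val_mul] at key
  rw [← Finset.mul_sum] at key
  have h0 : (((χ a : ℂˣ) : ℂ) - 1) * (∑ g : H, ((χ g : ℂˣ) : ℂ)) = 0 := by
    rw [sub_mul, one_mul, key, sub_self]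
  rcases mul_eq_zero.mp h0 with h | h
  · exact absurd (Units.ext (by simpa [sub_eq_zero] using h)) ha
  · exact h

lemma char_isIntegral (χ : H →* ℂˣ) (g : H) : IsIntegral ℤ ((χ g : ℂˣ) : ℂ) := by
  refine ⟨Polynomial.X ^ (Fintype.card H) - Polynomial.C 1,
    Polynomial.monic_X_pow_sub_C 1 Fintype.card_ne_zero, ?_⟩
  have h1 : (χ g) ^ (Fintype.card H) = 1 := by rw [← map_pow, pow_card_eq_one, map_one]
  have h2 : ((χ g : ℂˣ) : ℂ) ^ (Fintype.card H) = 1 := by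
    simpa using congrArg Units.val h1
  simp [h2]
end chars

section PGaux
variable {G : Type*} [CommGroup G] [Fintype G] [DecidableEq G]
variable {s t α : ℕ} {𝓛 : Set (Finset G)} [DecidablePred (· ∈ 𝓛)]

def linesF (𝓛 : Set (Finset G)) [DecidablePred (· ∈ 𝓛)] : Finset (Finset G) :=
  Finset.univ.filter (· ∈ 𝓛)

lemma mem_linesF {L : Finset G} : L ∈ linesF 𝓛 ↔ L ∈ 𝓛 := by
  simp [linesF]

def throughF (𝓛 : Set (Finset G)) [DecidablePred (· ∈ 𝓛)] (p : G) : Finset (Finset G) :=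
  (linesF 𝓛).filter (p ∈ ·)

lemma mem_throughF {p : G} {L : Finset G} : L ∈ throughF 𝓛 p ↔ L ∈ 𝓛 ∧ p ∈ L := by
  simp [throughF, mem_linesF]

lemma card_throughF (hpt : ∀ x : G, {L | L ∈ 𝓛 ∧ x ∈ L}.ncard = t + 1) (p : G) :
    (throughF 𝓛 p).card = t + 1 := by
  have h : {L | L ∈ 𝓛 ∧ p ∈ L} = ↑(throughF 𝓛 p) := by
    ext L; simp [mem_throughF]
  rw [← hpt p, h, Set.ncard_coe_finset]

lemma incidence_count (hline : ∀ L ∈ 𝓛, L.card = s + 1)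
    (hpt : ∀ x : G, {L | L ∈ 𝓛 ∧ x ∈ L}.ncard = t + 1) :
    (linesF 𝓛).card * (s + 1) = Fintype.card G * (t + 1) := by
  have h1 : ∑ L ∈ linesF 𝓛, L.card = (linesF 𝓛).card * (s + 1) := by
    rw [Finset.sum_congr rfl (fun L hL => hline L (mem_linesF.mp hL)), Finset.sum_const,
      smul_eq_mul]
  have h2 : ∑ L ∈ linesF 𝓛, L.card = ∑ p : G, (throughF 𝓛 p).card := by
    calc ∑ L ∈ linesF 𝓛, L.card
        = ∑ L ∈ linesF 𝓛, ∑ p : G, if p ∈ L then 1 else 0 := by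
          refine Finset.sum_congr rfl (fun L _ => ?_)
          rw [Finset.sum_ite_mem, Finset.univ_inter, Finset.sum_const, smul_eq_mul, mul_one]
      _ = ∑ p : G, ∑ L ∈ linesF 𝓛, if p ∈ L then 1 else 0 := Finset.sum_comm
      _ = ∑ p : G, (throughF 𝓛 p).card := by
          refine Finset.sum_congr rfl (fun p _ => ?_)
          rw [throughF, Finset.card_filter]
  rw [← h1, h2, Finset.sum_congr rfl (fun p _ => card_throughF hpt p), Finset.sum_const,
    smul_eq_mul, Finset.card_univ]

def orbF (L : Finset G) : Finset (Finset G) :=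
  Finset.univ.image (fun g : G => L.image (fun y => g * y))

lemma tr_tr (g h : G) (L : Finset G) :
    (L.image (fun y => h * y)).image (fun y => g * y) = L.image (fun y => (g * h) * y) := by
  rw [Finset.image_image]
  exact Finset.image_congr (fun y _ => (mul_assoc g h y).symm)

lemma tr_one (L : Finset G) : L.image (fun y => (1:G) * y) = L := by
  have : L.image (fun y => (1:G) * y) = L.image id := Finset.image_congr (fun y _ => one_mul y)
  rw [this, Finset.image_id]

lemma card_lines_eq (hpg : ∀ g : G, ∀ L ∈ 𝓛, L.image (fun y => g * y) ∈ 𝓛)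
    (hrig : ∀ g : G, ∀ L ∈ 𝓛, L.image (fun y => g * y) = L → g = 1) :
    (linesF 𝓛).card = ((linesF 𝓛).image orbF).card * Fintype.card G := by
  have inj : ∀ L ∈ 𝓛, Function.Injective (fun g : G => L.image (fun y => g * y)) := by
    intro L hL g h hgh
    simp only at hgh
    have key : L.image (fun y => (h⁻¹ * g) * y) = L := by
      rw [← tr_tr, hgh, tr_tr, inv_mul_cancel, tr_one]
    have := hrig (h⁻¹ * g) L hL key
    exact (inv_mul_eq_one.mp this).symm
  -- orbF is constant on orbits
  have orb_tr : ∀ (g : G) (L : Finset G), orbF (L.image (fun y => g * y)) = orbF L := by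
    intro g L
    unfold orbF
    have : (fun h : G => (L.image (fun y => g * y)).image (fun y => h * y))
        = (fun h : G => L.image (fun y => h * y)) ∘ (fun h : G => h * g) := by
      funext h
      simp only [Function.comp_apply]
      rw [tr_tr]
    rw [this, ← Finset.image_image]
    congr 1
    refine Finset.eq_univ_of_forall (fun h => ?_)
    exact Finset.mem_image.mpr ⟨h * g⁻¹, Finset.mem_univ _, by group⟩
  have fibers : ∀ L ∈ linesF 𝓛, (linesF 𝓛).filter (fun M => orbF M = orbF L) = orbF L := by
    intro L hL
    ext M
    simp only [Finset.mem_filter]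
    constructor
    · rintro ⟨hM, hMO⟩
      have : M ∈ orbF M := by
        unfold orbF
        refine Finset.mem_image.mpr ⟨1, Finset.mem_univ _, tr_one M⟩
      rwa [hMO] at this
    · intro hM
      obtain ⟨g, -, rfl⟩ := Finset.mem_image.mp hM
      exact ⟨mem_linesF.mpr (hpg g L (mem_linesF.mp hL)), orb_tr g L⟩
  have cardorb : ∀ L ∈ linesF 𝓛, (orbF L).card = Fintype.card G := by
    intro L hL
    unfold orbF
    rw [Finset.card_image_of_injective _ (inj L (mem_linesF.mp hL)), Finset.card_univ]
  rw [Finset.card_eq_sum_card_fiberwise (f := orbF) (t := (linesF 𝓛).image orbF)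
    (fun L hL => Finset.mem_image_of_mem _ hL)]
  rw [Finset.sum_congr rfl (fun O hO => ?_), Finset.sum_const, smul_eq_mul]
  obtain ⟨L, hL, rfl⟩ := Finset.mem_image.mp hO
  rw [fibers L hL, cardorb L hL]
def col (𝓛 : Set (Finset G)) (p q : G) : Prop :=
  p ≠ q ∧ ∃ L, L ∈ 𝓛 ∧ p ∈ L ∧ q ∈ L

instance : ∀ p q : G, Decidable (col 𝓛 p q) := by
  intro p q
  unfold col
  infer_instance

lemma col_symm {p q : G} (h : col 𝓛 p q) : col 𝓛 q p := by
  obtain ⟨hne, L, hL, hp, hq⟩ := h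
  exact ⟨hne.symm, L, hL, hq, hp⟩

lemma col_translate (hpg : ∀ g : G, ∀ L ∈ 𝓛, L.image (fun y => g * y) ∈ 𝓛)
    {p q : G} (k : G) (h : col 𝓛 p q) : col 𝓛 (k * p) (k * q) := by
  obtain ⟨hne, L, hL, hp, hq⟩ := h
  refine ⟨by simpa using hne, L.image (fun y => k * y), hpg k L hL, ?_, ?_⟩
  · exact Finset.mem_image_of_mem _ hp
  · exact Finset.mem_image_of_mem _ hq

lemma col_translate_iff (hpg : ∀ g : G, ∀ L ∈ 𝓛, L.image (fun y => g * y) ∈ 𝓛)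
    {p q : G} (k : G) : col 𝓛 (k * p) (k * q) ↔ col 𝓛 p q := by
  constructor
  · intro h
    have := col_translate hpg k⁻¹ h
    simpa using this
  · exact col_translate hpg k

lemma unique_line (hint : ∀ L ∈ 𝓛, ∀ M ∈ 𝓛, L ≠ M → ((L : Set G) ∩ (M : Set G)).ncard ≤ 1)
    {L M : Finset G} (hL : L ∈ 𝓛) (hM : M ∈ 𝓛) {p q : G} (hpq : p ≠ q)
    (hpL : p ∈ L) (hqL : q ∈ L) (hpM : p ∈ M) (hqM : q ∈ M) : L = M := by
  by_contra hne
  have h2 : 1 < ((L : Set G) ∩ (M : Set G)).ncard := by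
    rw [Set.one_lt_ncard (Set.toFinite _)]
    exact ⟨p, ⟨hpL, hpM⟩, q, ⟨hqL, hqM⟩, hpq⟩
  exact absurd (hint L hL M hM hne) (by omega)

/-- the number of points on a line `N` collinear with a point `p ∉ N` is `α`. -/
lemma points_on_line_collinear
    (hint : ∀ L ∈ 𝓛, ∀ M ∈ 𝓛, L ≠ M → ((L : Set G) ∩ (M : Set G)).ncard ≤ 1)
    (hα : ∀ x : G, ∀ L ∈ 𝓛, x ∉ L → {M | M ∈ 𝓛 ∧ x ∈ M ∧ ∃ y ∈ L, y ∈ M}.ncard = α)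
    {N : Finset G} (hN : N ∈ 𝓛) {p : G} (hp : p ∉ N) :
    (N.filter (fun y => col 𝓛 p y)).card = α := by
  have hset : {M | M ∈ 𝓛 ∧ p ∈ M ∧ ∃ y ∈ N, y ∈ M}
      = ↑((linesF 𝓛).filter (fun M => p ∈ M ∧ ∃ y ∈ N, y ∈ M)) := by
    ext M; simp [mem_linesF, and_assoc]
  have hcard : ((linesF 𝓛).filter (fun M => p ∈ M ∧ ∃ y ∈ N, y ∈ M)).card = α := by
    rw [← hα p N hN hp, hset, Set.ncard_coe_finset]
  rw [← hcard]
  refine Finset.card_bij (fun y hy => (Finset.mem_filter.mp hy).2.2.choose) ?_ ?_ ?_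
  · intro y hy
    obtain ⟨hyN, hne, -⟩ := Finset.mem_filter.mp hy
    obtain ⟨hL, hpL, hyL⟩ := (Finset.mem_filter.mp hy).2.2.choose_spec
    exact Finset.mem_filter.mpr ⟨mem_linesF.mpr hL, hpL, ⟨y, hyN, hyL⟩⟩
  · intro y hy y' hy' heq
    obtain ⟨hyN, hne, -⟩ := Finset.mem_filter.mp hy
    obtain ⟨hL, hpL, hyL⟩ := (Finset.mem_filter.mp hy).2.2.choose_spec
    obtain ⟨hyN', hne', -⟩ := Finset.mem_filter.mp hy'
    obtain ⟨hL', hpL', hyL'⟩ := (Finset.mem_filter.mp hy').2.2.choose_spec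
    by_contra hyy
    -- two distinct points y y' on both N and the common line
    rw [heq] at hyL
    have : N = (Finset.mem_filter.mp hy').2.2.choose :=
      unique_line hint hN hL' hyy hyN hyN' hyL hyL'
    rw [← this] at hpL'
    exact hp hpL'
  · intro M hM
    obtain ⟨hMl, hpM, y, hyN, hyM⟩ := Finset.mem_filter.mp hM
    have hMl' := mem_linesF.mp hMl
    have hpy : col 𝓛 p y := ⟨fun h => hp (h ▸ hyN), M, hMl', hpM, hyM⟩
    refine ⟨y, Finset.mem_filter.mpr ⟨hyN, hpy⟩, ?_⟩
    -- the chosen line equals M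
    obtain ⟨hL, hpL, hyL⟩ := (Finset.mem_filter.mp
      (Finset.mem_filter.mpr ⟨hyN, hpy⟩ : y ∈ N.filter (fun y => col 𝓛 p y))).2.2.choose_spec
    exact unique_line hint hL hMl' hpy.1 hpL hyL hpM hyM
def colF (𝓛 : Set (Finset G)) [DecidablePred (· ∈ 𝓛)] : Finset G :=
  Finset.univ.filter (fun q => col 𝓛 1 q)

lemma mem_colF {g : G} : g ∈ colF 𝓛 ↔ col 𝓛 1 g := by simp [colF]

lemma disj_through {N N' : Finset G} (hint : ∀ L ∈ 𝓛, ∀ M ∈ 𝓛, L ≠ M →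
    ((L : Set G) ∩ (M : Set G)).ncard ≤ 1)
    (hN : N ∈ throughF 𝓛 1) (hN' : N' ∈ throughF 𝓛 1) (hne : N ≠ N')
    {h : G} (h1 : h ≠ 1) (hhN : h ∈ N) (hhN' : h ∈ N') : False := by
  obtain ⟨hNl, hN1⟩ := mem_throughF.mp hN
  obtain ⟨hNl', hN1'⟩ := mem_throughF.mp hN'
  exact hne (unique_line hint hNl hNl' (Ne.symm h1) hN1 hhN hN1' hhN')

lemma card_colF (hline : ∀ L ∈ 𝓛, L.card = s + 1)
    (hpt : ∀ x : G, {L | L ∈ 𝓛 ∧ x ∈ L}.ncard = t + 1)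
    (hint : ∀ L ∈ 𝓛, ∀ M ∈ 𝓛, L ≠ M → ((L : Set G) ∩ (M : Set G)).ncard ≤ 1) :
    (colF 𝓛).card = s * (t + 1) := by
  have heq : colF 𝓛 = (throughF 𝓛 1).biUnion (fun N => N.erase 1) := by
    ext g
    simp only [mem_colF, Finset.mem_biUnion, mem_throughF, Finset.mem_erase]
    constructor
    · rintro ⟨hne, L, hL, h1, hg⟩
      exact ⟨L, ⟨hL, h1⟩, Ne.symm hne, hg⟩
    · rintro ⟨N, ⟨hN, h1⟩, hg1, hgN⟩
      exact ⟨Ne.symm hg1, N, hN, h1, hgN⟩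
  rw [heq, Finset.card_biUnion]
  · rw [Finset.sum_congr rfl (fun N hN => ?_), Finset.sum_const, smul_eq_mul,
      card_throughF hpt 1, mul_comm]
    obtain ⟨hNl, hN1⟩ := mem_throughF.mp hN
    rw [Finset.card_erase_of_mem hN1, hline N hNl]
    simp
  · intro N hN N' hN' hne
    refine Finset.disjoint_left.mpr (fun h hh hh' => ?_)
    obtain ⟨h1, hhN⟩ := Finset.mem_erase.mp hh
    obtain ⟨-, hhN'⟩ := Finset.mem_erase.mp hh'
    exact disj_through hint hN hN' hne h1 hhN hhN'

section counting
variable (hline : ∀ L ∈ 𝓛, L.card = s + 1)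
  (hpt : ∀ x : G, {L | L ∈ 𝓛 ∧ x ∈ L}.ncard = t + 1)
  (hint : ∀ L ∈ 𝓛, ∀ M ∈ 𝓛, L ≠ M → ((L : Set G) ∩ (M : Set G)).ncard ≤ 1)
  (hα : ∀ x : G, ∀ L ∈ 𝓛, x ∉ L → {M | M ∈ 𝓛 ∧ x ∈ M ∧ ∃ y ∈ L, y ∈ M}.ncard = α)
  (htr : ∀ g : G, ∀ L ∈ 𝓛, L.image (fun y => g * y) ∈ 𝓛)

include hint in
/-- a point `g` not collinear with `1` is not on any line through `1` -/
lemma not_mem_of_not_col {g : G} (hg1 : g ≠ 1) (hncol : ¬ col 𝓛 1 g)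
    {N : Finset G} (hN : N ∈ throughF 𝓛 1) : g ∉ N := by
  intro hgN
  obtain ⟨hNl, hN1⟩ := mem_throughF.mp hN
  exact hncol ⟨Ne.symm hg1, N, hNl, hN1, hgN⟩

include hint hα hpt in
/-- μ-count : common neighbours of `1` and a non-collinear `g ≠ 1` -/
lemma mu_count {g : G} (hg1 : g ≠ 1) (hncol : ¬ col 𝓛 1 g) :
    (Finset.univ.filter (fun h => col 𝓛 1 h ∧ col 𝓛 g h)).card = α * (t + 1) := by
  have key : Finset.univ.filter (fun h => col 𝓛 1 h ∧ col 𝓛 g h)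
      = (throughF 𝓛 1).biUnion (fun N => N.filter (fun h => col 𝓛 g h)) := by
    ext h
    simp only [Finset.mem_filter, Finset.mem_univ, true_and, Finset.mem_biUnion, mem_throughF]
    constructor
    · rintro ⟨⟨hne, N, hN, h1N, hhN⟩, hgh⟩
      exact ⟨N, ⟨hN, h1N⟩, hhN, hgh⟩
    · rintro ⟨N, ⟨hN, h1N⟩, hhN, hgh⟩
      have hne1 : h ≠ 1 := by
        rintro rfl
        exact hncol (col_symm hgh)
      exact ⟨⟨Ne.symm hne1, N, hN, h1N, hhN⟩, hgh⟩
  rw [key, Finset.card_biUnion]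
  · rw [Finset.sum_congr rfl (fun N hN => ?_), Finset.sum_const, smul_eq_mul,
      card_throughF hpt 1, mul_comm]
    exact points_on_line_collinear hint hα (mem_throughF.mp hN).1
      (not_mem_of_not_col hint hg1 hncol hN)
  · intro N hN N' hN' hne
    refine Finset.disjoint_left.mpr (fun h hh hh' => ?_)
    have h1 : h ≠ 1 := by
      rintro rfl
      exact hncol (col_symm (Finset.mem_filter.mp hh).2)
    exact disj_through hint hN hN' hne h1 (Finset.mem_filter.mp hh).1
      (Finset.mem_filter.mp hh').1

include hline hpt hint hα in
/-- λ-count : common neighbours of `1` and a collinear `g` -/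
lemma lambda_count {g : G} (hcol : col 𝓛 1 g) :
    (Finset.univ.filter (fun h => col 𝓛 1 h ∧ col 𝓛 g h)).card
      = (s - 1) + t * (α - 1) := by
  obtain ⟨hg1, M₀, hM₀, h1M₀, hgM₀⟩ := hcol
  have hM₀t : M₀ ∈ throughF 𝓛 1 := mem_throughF.mpr ⟨hM₀, h1M₀⟩
  set A : Finset G := (M₀.erase 1).erase g with hA
  set B : Finset G := ((throughF 𝓛 1).erase M₀).biUnion
    (fun N => (N.filter (fun h => col 𝓛 g h)).erase 1) with hB
  have hgN : ∀ N ∈ (throughF 𝓛 1).erase M₀, g ∉ N := by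
    intro N hN hgN
    obtain ⟨hNM₀, hNt⟩ := Finset.mem_erase.mp hN
    obtain ⟨hNl, hN1⟩ := mem_throughF.mp hNt
    exact hNM₀ (unique_line hint hNl hM₀ (Ne.symm hg1) hgN hN1 hgM₀ h1M₀)
  have hBnotM₀ : ∀ h ∈ B, h ∉ M₀ := by
    intro h hh hhM₀
    obtain ⟨N, hN, hh'⟩ := Finset.mem_biUnion.mp hh
    obtain ⟨h1, hhN⟩ := Finset.mem_erase.mp hh'
    exact disj_through hint (Finset.mem_of_mem_erase hN) hM₀t
      (Finset.ne_of_mem_erase hN) h1 (Finset.mem_filter.mp hhN).1 hhM₀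
  have key : Finset.univ.filter (fun h => col 𝓛 1 h ∧ col 𝓛 g h) = A ∪ B := by
    ext h
    simp only [Finset.mem_filter, Finset.mem_univ, true_and, Finset.mem_union]
    constructor
    · rintro ⟨⟨hne1, N, hN, h1N, hhN⟩, hgh⟩
      by_cases hhM₀ : h ∈ M₀
      · left
        exact Finset.mem_erase.mpr ⟨Ne.symm hgh.1, Finset.mem_erase.mpr ⟨Ne.symm hne1, hhM₀⟩⟩
      · right
        have hNM₀ : N ≠ M₀ := by rintro rfl; exact hhM₀ hhN
        refine Finset.mem_biUnion.mpr ⟨N, Finset.mem_erase.mpr ⟨hNM₀,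
          mem_throughF.mpr ⟨hN, h1N⟩⟩, Finset.mem_erase.mpr ⟨Ne.symm hne1,
          Finset.mem_filter.mpr ⟨hhN, hgh⟩⟩⟩
    · rintro (hh | hh)
      · obtain ⟨hhg, hh'⟩ := Finset.mem_erase.mp hh
        obtain ⟨hh1, hhM₀⟩ := Finset.mem_erase.mp hh'
        exact ⟨⟨Ne.symm hh1, M₀, hM₀, h1M₀, hhM₀⟩, ⟨Ne.symm hhg, M₀, hM₀, hgM₀, hhM₀⟩⟩
      · obtain ⟨N, hN, hh'⟩ := Finset.mem_biUnion.mp hh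
        obtain ⟨h1, hhN⟩ := Finset.mem_erase.mp hh'
        obtain ⟨hhN', hgh⟩ := Finset.mem_filter.mp hhN
        obtain ⟨hNl, hN1⟩ := mem_throughF.mp (Finset.mem_of_mem_erase hN)
        exact ⟨⟨Ne.symm h1, N, hNl, hN1, hhN'⟩, hgh⟩
  have hdisjAB : Disjoint A B := by
    refine Finset.disjoint_left.mpr (fun h hh hh' => ?_)
    exact hBnotM₀ h hh' (Finset.mem_of_mem_erase (Finset.mem_of_mem_erase hh))
  have cardA : A.card = s - 1 := by
    rw [hA, Finset.card_erase_of_mem (Finset.mem_erase.mpr ⟨Ne.symm hg1, hgM₀⟩),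
      Finset.card_erase_of_mem h1M₀, hline M₀ hM₀]
    omega
  have cardB : B.card = t * (α - 1) := by
    rw [hB, Finset.card_biUnion]
    · have inner : ∀ N ∈ (throughF 𝓛 1).erase M₀,
          ((N.filter (fun h => col 𝓛 g h)).erase 1).card = α - 1 := by
        intro N hN
        have hNt := Finset.mem_of_mem_erase hN
        obtain ⟨hNl, hN1⟩ := mem_throughF.mp hNt
        have h1mem : (1:G) ∈ N.filter (fun h => col 𝓛 g h) :=
          Finset.mem_filter.mpr ⟨hN1, ⟨Ne.symm hg1, M₀, hM₀, hgM₀, h1M₀⟩⟩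
        rw [Finset.card_erase_of_mem h1mem,
          points_on_line_collinear hint hα hNl (hgN N hN)]
      rw [Finset.sum_congr rfl inner, Finset.sum_const, smul_eq_mul,
        Finset.card_erase_of_mem hM₀t, card_throughF hpt 1]
      simp
    · intro N hN N' hN' hne
      refine Finset.disjoint_left.mpr (fun h hh hh' => ?_)
      obtain ⟨h1, hhN⟩ := Finset.mem_erase.mp hh
      obtain ⟨-, hhN'⟩ := Finset.mem_erase.mp hh'
      exact disj_through hint (Finset.mem_of_mem_erase hN) (Finset.mem_of_mem_erase hN')
        hne h1 (Finset.mem_filter.mp hhN).1 (Finset.mem_filter.mp hhN').1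
  rw [key, Finset.card_union_of_disjoint hdisjAB, cardA, cardB]

include hline hpt hint hα htr in
lemma exists_noncol (hαs : α < s) (hαt : α < t) :
    ∃ g : G, g ≠ 1 ∧ ¬ col 𝓛 1 g := by
  by_contra hcon
  push_neg at hcon
  have h2 : 1 < (throughF 𝓛 1).card := by rw [card_throughF hpt 1]; omega
  obtain ⟨L₁, hL₁, L₂, hL₂, hne⟩ := Finset.one_lt_card.mp h2
  obtain ⟨hL₁l, h1L₁⟩ := mem_throughF.mp hL₁
  obtain ⟨hL₂l, h1L₂⟩ := mem_throughF.mp hL₂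
  have hcard2 : 1 < L₂.card := by rw [hline L₂ hL₂l]; omega
  obtain ⟨a, ha, b, hb, hab⟩ := Finset.one_lt_card.mp hcard2
  obtain ⟨p, hpL₂, hp1⟩ : ∃ p, p ∈ L₂ ∧ p ≠ 1 := by
    rcases eq_or_ne a 1 with rfl | h
    · exact ⟨b, hb, fun hb1 => hab hb1.symm⟩
    · exact ⟨a, ha, h⟩
  have hpL₁ : p ∉ L₁ := fun hmem =>
    hne (unique_line hint hL₁l hL₂l hp1 hmem h1L₁ hpL₂ h1L₂)
  have hfilter : L₁.filter (fun y => col 𝓛 p y) = L₁ := by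
    refine Finset.filter_true_of_mem (fun y hy => ?_)
    have hyp : y ≠ p := fun h => hpL₁ (h ▸ hy)
    have h1 : p⁻¹ * y ≠ 1 := fun h => hyp (inv_mul_eq_one.mp h).symm
    have h2 := col_translate htr p (hcon (p⁻¹ * y) h1)
    simpa using h2
  have hcount := points_on_line_collinear hint hα hL₁l hpL₁
  rw [hfilter, hline L₁ hL₁l] at hcount
  omega

include htr in
lemma col_one_inv {g : G} (h : col 𝓛 1 g) : col 𝓛 1 g⁻¹ := by
  have h2 := col_translate htr g⁻¹ h
  have h3 : col 𝓛 g⁻¹ 1 := by simpa using h2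
  exact col_symm h3

include hline hpt hint hα htr in
lemma benson (hα2 : 2 ≤ α) (hαs : α < s) (hαt : α < t) :
    (s + t + 1 - α) ∣ (s + 1) * (t + 1) := by
  classical
  haveI : NeZero (Monoid.exponent G) := ⟨Monoid.exponent_ne_zero_of_finite⟩
  haveI : Fintype (G →* ℂˣ) :=
    Fintype.ofEquiv G (CommGroup.monoidHom_mulEquiv_of_hasEnoughRootsOfUnity G ℂ).some.toEquiv.symm
  obtain ⟨g₀, hg₀1, hg₀⟩ := exists_noncol hline hpt hint hα htr hαs hαt
  have hs1 : 1 ≤ s := by omega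
  have hα1 : 1 ≤ α := by omega
  have hcolF := card_colF hline hpt hint
  set F : (G →* ℂˣ) → ℂ := fun χ => ∑ g ∈ colF 𝓛, ((χ g : ℂˣ) : ℂ) with hF
  set NC : Finset G := (Finset.univ.erase 1).filter (fun k => ¬ col 𝓛 1 k) with hNC
  have colF_eq : colF 𝓛 = (Finset.univ.erase 1).filter (fun k => col 𝓛 1 k) := by
    ext k
    simp only [mem_colF, Finset.mem_filter, Finset.mem_erase, Finset.mem_univ, true_and, and_true]
    exact ⟨fun h => ⟨Ne.symm h.1, h⟩, fun h => h.2⟩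
  have split : ∀ f : G → ℂ,
      ∑ k : G, f k = f 1 + ((∑ k ∈ colF 𝓛, f k) + ∑ k ∈ NC, f k) := by
    intro f
    rw [← Finset.add_sum_erase _ f (Finset.mem_univ 1)]
    congr 1
    rw [← Finset.sum_filter_add_sum_filter_not (Finset.univ.erase 1) (fun k => col 𝓛 1 k) f,
      ← colF_eq, ← hNC]
  -- counting function
  have filter_eq : ∀ k : G, (colF 𝓛).filter (fun g => col 𝓛 g k)
      = Finset.univ.filter (fun g => col 𝓛 1 g ∧ col 𝓛 k g) := by
    intro k; ext g
    simp only [Finset.mem_filter, mem_colF, Finset.mem_univ, true_and]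
    exact ⟨fun ⟨h1, h2⟩ => ⟨h1, col_symm h2⟩, fun ⟨h1, h2⟩ => ⟨h1, col_symm h2⟩⟩
  have n_one : ((colF 𝓛).filter (fun g => col 𝓛 g 1)).card = s * (t + 1) := by
    have h : (colF 𝓛).filter (fun g => col 𝓛 g 1) = colF 𝓛 :=
      Finset.filter_true_of_mem (fun g hg => col_symm (mem_colF.mp hg))
    rw [h, hcolF]
  have n_col : ∀ k, col 𝓛 1 k →
      ((colF 𝓛).filter (fun g => col 𝓛 g k)).card = (s - 1) + t * (α - 1) := by
    intro k hk
    rw [filter_eq k]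
    exact lambda_count hline hpt hint hα hk
  have n_ncol : ∀ k, k ≠ 1 → ¬ col 𝓛 1 k →
      ((colF 𝓛).filter (fun g => col 𝓛 g k)).card = α * (t + 1) := by
    intro k hk1 hk
    rw [filter_eq k]
    exact mu_count hpt hint hα hk1 hk
  -- expansion of F² as a sum over the group
  have expand : ∀ χ : G →* ℂˣ, F χ * F χ
      = ∑ k : G, ((((colF 𝓛).filter (fun g => col 𝓛 g k)).card : ℂ) * ((χ k : ℂˣ) : ℂ)) := by
    intro χ
    rw [hF]
    simp only
    rw [Finset.sum_mul_sum]
    have step1 : ∀ g ∈ colF 𝓛, (∑ h ∈ colF 𝓛, ((χ g : ℂˣ) : ℂ) * ((χ h : ℂˣ) : ℂ))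
        = ∑ k ∈ Finset.univ.filter (fun k => col 𝓛 g k), ((χ k : ℂˣ) : ℂ) := by
      intro g hg
      refine Finset.sum_nbij' (fun h => g * h) (fun k => g⁻¹ * k) ?_ ?_ ?_ ?_ ?_
      · intro h hh
        refine Finset.mem_filter.mpr ⟨Finset.mem_univ _, ?_⟩
        have := col_translate htr g (mem_colF.mp hh)
        simpa using this
      · intro k hk
        refine mem_colF.mpr ?_
        have := col_translate htr g⁻¹ (Finset.mem_filter.mp hk).2
        simpa using this
      · intro h hh; simp
      · intro k hk; simp
      · intro h hh
        rw [← Units.val_mul, ← map_mul]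
    rw [Finset.sum_congr rfl step1]
    calc ∑ g ∈ colF 𝓛, ∑ k ∈ Finset.univ.filter (fun k => col 𝓛 g k), ((χ k : ℂˣ) : ℂ)
        = ∑ g ∈ colF 𝓛, ∑ k : G, (if col 𝓛 g k then ((χ k : ℂˣ) : ℂ) else 0) := by
          refine Finset.sum_congr rfl fun g _ => ?_
          rw [Finset.sum_filter]
      _ = ∑ k : G, ∑ g ∈ colF 𝓛, (if col 𝓛 g k then ((χ k : ℂˣ) : ℂ) else 0) := Finset.sum_comm
      _ = ∑ k : G, ((((colF 𝓛).filter (fun g => col 𝓛 g k)).card : ℂ) * ((χ k : ℂˣ) : ℂ)) := by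
          refine Finset.sum_congr rfl fun k _ => ?_
          rw [← Finset.sum_filter, Finset.sum_const, nsmul_eq_mul]
  -- the quadratic equation for nontrivial characters
  have quad : ∀ χ : G →* ℂˣ, χ ≠ 1 → F χ = (s : ℂ) - α ∨ F χ = -((t : ℂ) + 1) := by
    intro χ hχ
    have hRval : ∑ k ∈ NC, ((χ k : ℂˣ) : ℂ) = -1 - F χ := by
      have h0 := group_sum_zero hχ
      rw [split (fun k => ((χ k : ℂˣ) : ℂ))] at h0
      simp only [map_one, Units.val_one] at h0
      rw [hF]
      linear_combination h0
    have expandχ := expand χ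
    rw [split (fun k => ((((colF 𝓛).filter (fun g => col 𝓛 g k)).card : ℂ) * ((χ k : ℂˣ) : ℂ)))]
      at expandχ
    have hterm1 : ((((colF 𝓛).filter (fun g => col 𝓛 g 1)).card : ℂ) * ((χ 1 : ℂˣ) : ℂ))
        = (s : ℂ) * ((t : ℂ) + 1) := by
      rw [n_one]; simp only [map_one, Units.val_one, mul_one]; push_cast; ring
    have hterm2 : ∑ k ∈ colF 𝓛, ((((colF 𝓛).filter (fun g => col 𝓛 g k)).card : ℂ)
        * ((χ k : ℂˣ) : ℂ)) = (((s : ℂ) - 1) + (t : ℂ) * ((α : ℂ) - 1)) * F χ := by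
      rw [hF, Finset.mul_sum]
      refine Finset.sum_congr rfl fun k hk => ?_
      rw [n_col k (mem_colF.mp hk)]
      push_cast [Nat.cast_sub hs1, Nat.cast_sub hα1]
      ring
    have hterm3 : ∑ k ∈ NC, ((((colF 𝓛).filter (fun g => col 𝓛 g k)).card : ℂ)
        * ((χ k : ℂˣ) : ℂ)) = ((α : ℂ) * ((t : ℂ) + 1)) * (-1 - F χ) := by
      rw [← hRval, Finset.mul_sum]
      refine Finset.sum_congr rfl fun k hk => ?_
      obtain ⟨hk1, hknc⟩ := Finset.mem_filter.mp (hNC ▸ hk)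
      rw [n_ncol k (Finset.mem_erase.mp hk1).1 hknc]
      push_cast
      ring
    rw [hterm1, hterm2, hterm3] at expandχ
    have key : (F χ - ((s : ℂ) - α)) * (F χ + ((t : ℂ) + 1)) = 0 := by
      linear_combination expandχ
    rcases mul_eq_zero.mp key with h | h
    · exact Or.inl (sub_eq_zero.mp h)
    · exact Or.inr (eq_neg_of_add_eq_zero_left h)
  -- value at the trivial character
  have hFone : F 1 = (s : ℂ) * ((t : ℂ) + 1) := by
    rw [hF]
    simp only [MonoidHom.one_apply, Units.val_one, Finset.sum_const, nsmul_eq_mul, mul_one]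
    rw [hcolF]; push_cast; ring
  set Rset : Finset (G →* ℂˣ) :=
    Finset.univ.filter (fun χ => χ ≠ 1 ∧ F χ = (s : ℂ) - α) with hRset
  set z : ℂ := ∑ χ ∈ Rset, ((χ g₀⁻¹ : ℂˣ) : ℂ) with hz
  have htotal : ∑ χ : G →* ℂˣ, (F χ + ((t : ℂ) + 1)) * ((χ g₀⁻¹ : ℂˣ) : ℂ) = 0 := by
    have hpart1 : ∑ χ : G →* ℂˣ, F χ * ((χ g₀⁻¹ : ℂˣ) : ℂ) = 0 := by
      have hrw : ∀ χ : G →* ℂˣ, F χ * ((χ g₀⁻¹ : ℂˣ) : ℂ)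
          = ∑ c ∈ colF 𝓛, ((χ (c * g₀⁻¹) : ℂˣ) : ℂ) := by
        intro χ
        rw [hF]
        simp only
        rw [Finset.sum_mul]
        refine Finset.sum_congr rfl fun c _ => ?_
        rw [map_mul, Units.val_mul]
      rw [Finset.sum_congr rfl (fun χ _ => hrw χ), Finset.sum_comm]
      refine Finset.sum_eq_zero fun c hc => ?_
      refine char_sum_zero_s5 ?_
      intro h
      rw [mul_inv_eq_one] at h
      exact hg₀ (h ▸ mem_colF.mp hc)
    have hpart2 : ∑ χ : G →* ℂˣ, ((t : ℂ) + 1) * ((χ g₀⁻¹ : ℂˣ) : ℂ) = 0 := by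
      rw [← Finset.mul_sum, char_sum_zero_s5 (inv_ne_one.mpr hg₀1), mul_zero]
    calc ∑ χ : G →* ℂˣ, (F χ + ((t : ℂ) + 1)) * ((χ g₀⁻¹ : ℂˣ) : ℂ)
        = ∑ χ : G →* ℂˣ, (F χ * ((χ g₀⁻¹ : ℂˣ) : ℂ) + ((t : ℂ) + 1) * ((χ g₀⁻¹ : ℂˣ) : ℂ)) := by
          refine Finset.sum_congr rfl fun χ _ => ?_
          ring
      _ = 0 := by rw [Finset.sum_add_distrib, hpart1, hpart2, add_zero]
  have hsplit2 : ∑ χ : G →* ℂˣ, (F χ + ((t : ℂ) + 1)) * ((χ g₀⁻¹ : ℂˣ) : ℂ)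
      = ((s : ℂ) + 1) * ((t : ℂ) + 1) + ((s : ℂ) + (t : ℂ) + 1 - (α : ℂ)) * z := by
    rw [← Finset.add_sum_erase _ _ (Finset.mem_univ (1 : G →* ℂˣ))]
    have h1term : (F 1 + ((t : ℂ) + 1)) * (((1 : G →* ℂˣ) g₀⁻¹ : ℂˣ) : ℂ)
        = ((s : ℂ) + 1) * ((t : ℂ) + 1) := by
      rw [hFone]
      simp only [MonoidHom.one_apply, Units.val_one, mul_one]
      ring
    rw [h1term]
    congr 1
    rw [← Finset.sum_filter_add_sum_filter_not (Finset.univ.erase (1 : G →* ℂˣ))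
      (fun χ => F χ = (s : ℂ) - α)]
    have hA : (Finset.univ.erase (1 : G →* ℂˣ)).filter (fun χ => F χ = (s : ℂ) - α) = Rset := by
      ext χ
      simp only [Finset.mem_filter, Finset.mem_erase, Finset.mem_univ, true_and, and_true,
        hRset]
      try tauto
    have hB : ∑ χ ∈ (Finset.univ.erase (1 : G →* ℂˣ)).filter (fun χ => ¬ F χ = (s : ℂ) - α),
        (F χ + ((t : ℂ) + 1)) * ((χ g₀⁻¹ : ℂˣ) : ℂ) = 0 := by
      refine Finset.sum_eq_zero fun χ hχ => ?_
      obtain ⟨hmem, hne⟩ := Finset.mem_filter.mp hχ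
      have hχ1 : χ ≠ 1 := (Finset.mem_erase.mp hmem).1
      rcases quad χ hχ1 with h | h
      · exact absurd h hne
      · rw [h]
        ring_nf
        try simp
    rw [hA, hB, add_zero, hz, Finset.mul_sum]
    refine Finset.sum_congr rfl fun χ hχ => ?_
    have := (Finset.mem_filter.mp (hRset ▸ hχ)).2.2
    rw [this]
    ring
  rw [hsplit2] at htotal
  -- z is an algebraic integer
  have hzint : IsIntegral ℤ z := by
    rw [hz]
    exact IsIntegral.sum _ (fun χ _ => char_isIntegral χ g₀⁻¹)
  set T : ℕ := s + t + 1 - α with hT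
  have hTc : ((T : ℕ) : ℂ) = (s : ℂ) + (t : ℂ) + 1 - (α : ℂ) := by
    rw [hT]
    push_cast [Nat.cast_sub (by omega : α ≤ s + t + 1)]
    ring
  have hTpos : 0 < T := by omega
  set q : ℚ := -(((s + 1) * (t + 1) : ℕ) : ℚ) / ((T : ℕ) : ℚ) with hq
  have hqz : (q : ℂ) = z := by
    rw [hq]
    push_cast
    rw [div_eq_iff (by exact_mod_cast hTpos.ne' : ((T : ℕ) : ℂ) ≠ 0), hTc]
    push_cast
    linear_combination -htotal
  have hqint : IsIntegral ℤ q := by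
    have h := hqz ▸ hzint
    rw [← eq_ratCast (algebraMap ℚ ℂ) q] at h
    exact (isIntegral_algebraMap_iff (algebraMap ℚ ℂ).injective).mp h
  obtain ⟨m, hm⟩ := IsIntegrallyClosed.isIntegral_iff.mp hqint
  have hmq : (m : ℚ) = q := by exact_mod_cast hm
  have hmT : (m : ℚ) * ((T : ℕ) : ℚ) = -(((s + 1) * (t + 1) : ℕ) : ℚ) := by
    rw [hmq, hq]
    field_simp
  have hint' : m * (T : ℤ) = -(((s + 1) * (t + 1) : ℕ) : ℤ) := by exact_mod_cast hmT
  have : ((T : ℕ) : ℤ) ∣ (((s + 1) * (t + 1) : ℕ) : ℤ) := ⟨-m, by linarith⟩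
  exact_mod_cast this

end counting
end PGaux

/-- for a proper `pg(s,t,α)` of rigid type with abelian Singer group `G`,
there are positive integers `x`, `c` with `t+1 = x(s+1)`, `(α+1)² - c(s+1) > 0` and
`x((α+1)² - c(s+1)) = c(s-α)` (equivalently `x(α+1)² = c((x+1)(s+1) - (α+1))`). -/
theorem rigid_type_x_c_relation
    (G : Type*) [CommGroup G] [Fintype G] [DecidableEq G]
    (s t α : ℕ) (hα2 : 2 ≤ α) (hαs : α < s) (hαt : α < t)
    (𝓛 : Set (Finset G)) (hpg : IsPGSinger G 𝓛 s t α) (hrig : RigidType G 𝓛) :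
    ∃ x c : ℕ, 0 < x ∧ 0 < c ∧ t + 1 = x * (s + 1) ∧
      c * (s + 1) < (α + 1) ^ 2 ∧
      x * ((α + 1) ^ 2 - c * (s + 1)) = c * (s - α) ∧
      x * (α + 1) ^ 2 = c * ((x + 1) * (s + 1) - (α + 1)) := by
  classical
  obtain ⟨hline, hpt, hint, halpha, htr⟩ := hpg
  have hv : 0 < Fintype.card G := Fintype.card_pos
  have hb := incidence_count hline hpt
  have horb := card_lines_eq htr hrig
  have hbpos : 0 < (linesF 𝓛).card := by
    have h1 : (throughF 𝓛 1).card = t + 1 := card_throughF hpt (1 : G)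
    have hsub : throughF 𝓛 (1 : G) ⊆ linesF 𝓛 := Finset.filter_subset _ _
    have h2 : 0 < (throughF 𝓛 (1 : G)).card := by omega
    exact lt_of_lt_of_le h2 (Finset.card_le_card hsub)
  set x := ((linesF 𝓛).image orbF).card with hx
  have hxpos : 0 < x :=
    Finset.card_pos.mpr ((Finset.card_pos.mp hbpos).image orbF)
  have hts : t + 1 = x * (s + 1) := by
    have h1 : Fintype.card G * (t + 1) = Fintype.card G * (x * (s + 1)) := by
      rw [← hb, horb]; ring
    exact Nat.eq_of_mul_eq_mul_left hv h1
  have hdvd : (s + t + 1 - α) ∣ (s + 1) * (t + 1) :=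
    benson hline hpt hint halpha htr hα2 hαs hαt
  set T := s + t + 1 - α with hT
  have hTpos : 0 < T := by omega
  have h2 : T ∣ x * (s + 1) ^ 2 := by
    have hrw : (s + 1) * (t + 1) = x * (s + 1) ^ 2 := by rw [hts]; ring
    rwa [hrw] at hdvd
  -- pass to ℤ to get T ∣ x*(α+1)^2
  obtain ⟨d, hd⟩ := h2
  have hdz : (x : ℤ) * ((s : ℤ) + 1) ^ 2 = (T : ℤ) * d := by exact_mod_cast hd
  have hTz : (T : ℤ) = (x : ℤ) * ((s : ℤ) + 1) + (s : ℤ) - (α : ℤ) := by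
    have h3 : (T : ℤ) = (s : ℤ) + (t : ℤ) + 1 - (α : ℤ) := by
      rw [hT]
      push_cast [Nat.cast_sub (by omega : α ≤ s + t + 1)]
      ring
    have h4 : (t : ℤ) + 1 = (x : ℤ) * ((s : ℤ) + 1) := by exact_mod_cast hts
    rw [h3]
    linarith
  have hαeq : (α : ℤ) + 1 = ((x : ℤ) + 1) * ((s : ℤ) + 1) - (T : ℤ) := by
    rw [hTz]; ring
  have key : ((T : ℕ) : ℤ) ∣ ((x * (α + 1) ^ 2 : ℕ) : ℤ) := by
    refine ⟨((x : ℤ) + 1) ^ 2 * d - 2 * (x : ℤ) * (((x : ℤ) + 1) * ((s : ℤ) + 1))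
      + (x : ℤ) * (T : ℤ), ?_⟩
    push_cast
    rw [hαeq]
    linear_combination ((x : ℤ) + 1) ^ 2 * hdz
  have keyn : T ∣ x * (α + 1) ^ 2 := Int.natCast_dvd_natCast.mp key
  obtain ⟨c, hc⟩ := keyn
  have hcpos : 0 < c := by
    rcases Nat.eq_zero_or_pos c with rfl | h
    · simp at hc
      omega
    · exact h
  have hxsT : x * (s + 1) < T := by
    have : T = x * (s + 1) + s - α := by omega
    omega
  have hlt : c * (s + 1) < (α + 1) ^ 2 := by
    have hstep : x * (c * (s + 1)) < x * ((α + 1) ^ 2) := by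
      calc x * (c * (s + 1)) = c * (x * (s + 1)) := by ring
        _ < c * T := by exact (Nat.mul_lt_mul_left hcpos).mpr hxsT
        _ = x * ((α + 1) ^ 2) := by rw [hc]; ring
    exact Nat.lt_of_mul_lt_mul_left hstep
  have hTeq : (x + 1) * (s + 1) - (α + 1) = T := by
    have hexp : (x + 1) * (s + 1) = x * (s + 1) + (s + 1) := by ring
    omega
  refine ⟨x, c, hxpos, hcpos, hts, hlt, ?_, ?_⟩
  · -- x * ((α+1)^2 - c*(s+1)) = c * (s - α)
    zify [le_of_lt hlt, (by omega : α ≤ s)]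
    have hcz : ((x : ℤ)) * ((α : ℤ) + 1) ^ 2 = (T : ℤ) * c := by exact_mod_cast hc
    linear_combination hcz + (c : ℤ) * hTz
  · rw [hTeq, hc]
    ring
end
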